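/- arXiv:1912.04428 — 3 statements merged into one kernel-verified Lean document; each statement's English description precedes it below -/
import Mathlib

section
/- For two convex bodies K, L ⊂ ℝ^d with nonempty interior, the Hausdorff distance between K and L equals the Hausdorff distance between their boundaries: d_H(K, L) = d_H(∂K, ∂L). -/
open MeasureTheory Topology Metric Set Filter Function
open scoped ENNReal RealInnerProductSpace

noncomputable section

abbrev Euc (d : ℕ) := EuclideanSpace ℝ (Fin d)

/-- The rotation set of a potential `F` with respect to the dynamics `T`. -/
def rotSet {X : Type*} [MeasurableSpace X] {d : ℕ} (T : X → X) (F : X → Euc d) :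
    Set (Euc d) :=
  {v | ∃ μ : Measure X, IsProbabilityMeasure μ ∧ Measure.map T μ = μ ∧ ∫ x, F x ∂μ = v}

/-- A `T`-invariant probability measure supported on a single periodic orbit. -/
def IsPeriodicMeasure {X : Type*} [MeasurableSpace X] (T : X → X) (μ : Measure X) : Prop :=
  ∃ (x : X) (n : ℕ), 0 < n ∧ T^[n] x = x ∧
    μ = (n : ℝ≥0∞)⁻¹ • ∑ i ∈ Finset.range n, Measure.dirac (T^[i] x)

/-- The periodic rotation set. -/
def perRotSet {X : Type*} [MeasurableSpace X] {d : ℕ} (T : X → X) (F : X → Euc d) :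
    Set (Euc d) :=
  {v | ∃ μ : Measure X, IsPeriodicMeasure T μ ∧ ∫ x, F x ∂μ = v}

/-- `T` has at least two distinct invariant probability measures. -/
def NonUniquelyErgodic {X : Type*} [MeasurableSpace X] (T : X → X) : Prop :=
  ∃ μ ν : Measure X, IsProbabilityMeasure μ ∧ IsProbabilityMeasure ν ∧
    Measure.map T μ = μ ∧ Measure.map T ν = ν ∧ μ ≠ ν

/-- The periodic measures are weak-* dense in the set of invariant probability measures. -/
def DensePeriodicMeasures {X : Type*} [MeasurableSpace X] [TopologicalSpace X] [OpensMeasurableSpace X]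
    (T : X → X) : Prop :=
  ∀ μ : ProbabilityMeasure X, Measure.map T μ.toMeasure = μ.toMeasure →
    μ ∈ closure {ν : ProbabilityMeasure X | IsPeriodicMeasure T ν.toMeasure}

variable {E : Type*} [NormedAddCommGroup E] [NormedSpace ℝ E]

/-- The distance to a nonempty convex set is a convex function. -/
theorem aux_convexOn_infDist {L : Set E} (hL : Convex ℝ L) (hLn : L.Nonempty) :
    ConvexOn ℝ univ (fun x => infDist x L) := by
  refine ⟨convex_univ, fun x _ y _ a b ha hb hab => ?_⟩
  simp only [smul_eq_mul]
  refine le_of_forall_pos_le_add fun ε hε => ?_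
  obtain ⟨p, hp, hxp⟩ := (infDist_lt_iff hLn).1 (lt_add_of_pos_right (infDist x L) hε)
  obtain ⟨q, hq, hyq⟩ := (infDist_lt_iff hLn).1 (lt_add_of_pos_right (infDist y L) hε)
  have hmem : a • p + b • q ∈ L := hL hp hq ha hb hab
  calc infDist (a • x + b • y) L ≤ dist (a • x + b • y) (a • p + b • q) :=
        infDist_le_dist_of_mem hmem
    _ ≤ dist (a • x) (a • p) + dist (b • y) (b • q) := dist_add_add_le _ _ _ _
    _ = a * dist x p + b * dist y q := by
        rw [dist_smul₀, dist_smul₀, Real.norm_eq_abs, Real.norm_eq_abs,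
          abs_of_nonneg ha, abs_of_nonneg hb]
    _ ≤ a * (infDist x L + ε) + b * (infDist y L + ε) := by
        have h1 := hxp.le
        have h2 := hyq.le
        gcongr
    _ = a * infDist x L + b * infDist y L + (a + b) * ε := by ring
    _ = a * infDist x L + b * infDist y L + ε := by rw [hab, one_mul]

/-- A segment from a point of a closed set to a point outside it meets the frontier. -/
theorem aux_exists_frontier_mem_segment {s : Set E} (hs : IsClosed s) {a b : E}
    (ha : a ∈ s) (hb : b ∉ s) : ∃ q ∈ frontier s, q ∈ segment ℝ a b := by
  set f : ℝ → E := fun t => a + t • (b - a) with hf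
  have hfc : Continuous f := by fun_prop
  set T : Set ℝ := {t | t ∈ Icc (0:ℝ) 1 ∧ f t ∈ s} with hT
  have h0 : (0:ℝ) ∈ T := ⟨⟨le_refl _, zero_le_one⟩, by simp [f, ha]⟩
  have hbd : BddAbove T := ⟨1, fun t ht => ht.1.2⟩
  set t₀ := sSup T with ht₀
  have ht₀mem : t₀ ∈ Icc (0:ℝ) 1 := ⟨le_csSup hbd h0, csSup_le ⟨0, h0⟩ fun t ht => ht.1.2⟩
  have hft₀ : f t₀ ∈ s := by
    have h1 : t₀ ∈ closure T := csSup_mem_closure ⟨0, h0⟩ hbd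
    have h2 : f t₀ ∈ closure s := map_mem_closure hfc h1 fun t ht => ht.2
    rwa [hs.closure_eq] at h2
  have hf1 : f 1 = b := by simp [f]
  have ht₀lt : t₀ < 1 := by
    rcases lt_or_eq_of_le ht₀mem.2 with h | h
    · exact h
    · exact absurd (h ▸ hft₀) (hf1 ▸ hb)
  have hnotint : f t₀ ∉ interior s := by
    intro hint
    obtain ⟨δ, hδ, hball⟩ := Metric.isOpen_iff.1 (isOpen_interior.preimage hfc) t₀ hint
    set t := min (t₀ + δ / 2) 1 with htdef
    have htT : t ∈ T := by
      refine ⟨⟨le_min (by linarith [ht₀mem.1]) zero_le_one, min_le_right _ _⟩, ?_⟩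
      have : t ∈ ball t₀ δ := by
        rw [mem_ball, Real.dist_eq, abs_lt]
        constructor
        · have : t₀ < t := lt_min (by linarith) ht₀lt
          linarith
        · have : t ≤ t₀ + δ / 2 := min_le_left _ _
          linarith
      exact interior_subset (hball this)
    have : t ≤ t₀ := le_csSup hbd htT
    have : t₀ < t := lt_min (by linarith) ht₀lt
    linarith
  refine ⟨f t₀, ⟨subset_closure hft₀, hnotint⟩, ?_⟩
  rw [segment_eq_image']
  exact ⟨t₀, ht₀mem, rfl⟩


/-- From any point of a compact convex set one can find a frontier point at which the
distance to a nonempty convex set `L` is at least as large. -/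
theorem aux_exists_frontier_infDist_ge {K L : Set E} (hKc : IsCompact K) (hKu : K ≠ univ)
    (hLv : Convex ℝ L) (hLn : L.Nonempty) {x : E} (hx : x ∈ K) :
    ∃ y ∈ frontier K, infDist x L ≤ infDist y L := by
  obtain ⟨z, hz⟩ := (ne_univ_iff_exists_notMem K).1 hKu
  have hzx : z ≠ x := fun h => hz (h ▸ hx)
  set v : E := z - x with hv
  have hvne : v ≠ 0 := sub_ne_zero.2 hzx
  -- frontier point in direction v
  obtain ⟨q₁, hq₁f, hq₁s⟩ := aux_exists_frontier_mem_segment hKc.isClosed hx hz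
  rw [segment_eq_image'] at hq₁s
  obtain ⟨α, hα, hq₁⟩ := hq₁s
  -- a point outside K in direction -v
  obtain ⟨R, hR⟩ := hKc.isBounded.subset_closedBall x
  have hRx : 0 ≤ R := by
    have := hR hx
    simpa [dist_self] using this
  set w : E := x - ((R + 1) / ‖v‖) • v with hw
  have hwK : w ∉ K := by
    intro hwK
    have := hR hwK
    rw [mem_closedBall, dist_eq_norm] at this
    have hnv : ‖v‖ > 0 := norm_pos_iff.2 hvne
    have : ‖w - x‖ ≤ R := this
    rw [hw] at this
    simp only [sub_sub_cancel_left, norm_neg, norm_smul, Real.norm_eq_abs] at this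
    rw [abs_of_nonneg (by positivity)] at this
    rw [div_mul_cancel₀ _ (ne_of_gt hnv)] at this
    linarith
  obtain ⟨q₂, hq₂f, hq₂s⟩ := aux_exists_frontier_mem_segment hKc.isClosed hx hwK
  rw [segment_eq_image'] at hq₂s
  obtain ⟨θ, hθ, hq₂⟩ := hq₂s
  have hq₂' : q₂ = x - (θ * ((R + 1) / ‖v‖)) • v := by
    rw [← hq₂, hw]
    simp [smul_smul, sub_eq_add_neg, smul_sub]
  set β : ℝ := θ * ((R + 1) / ‖v‖) with hβ
  have hβ0 : 0 ≤ β := by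
    have hnv : (0:ℝ) < ‖v‖ := norm_pos_iff.2 hvne
    have := hθ.1
    positivity
  have hq₁' : q₁ = x + α • v := by rw [← hq₁]
  rcases eq_or_lt_of_le hα.1 with h0 | hαpos
  · exact ⟨q₁, hq₁f, le_of_eq (by rw [hq₁', ← h0, zero_smul, add_zero])⟩
  rcases eq_or_lt_of_le hβ0 with h0 | hβpos
  · exact ⟨q₂, hq₂f, le_of_eq (by rw [hq₂', ← h0, zero_smul, sub_zero])⟩
  -- x is a convex combination of q₁ and q₂
  have hsum : 0 < α + β := by linarith
  have ha' : 0 ≤ β / (α + β) := by positivity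
  have hb' : 0 ≤ α / (α + β) := by positivity
  have hab' : β / (α + β) + α / (α + β) = 1 := by
    field_simp
    ring
  have hcombo : (β / (α + β)) • q₁ + (α / (α + β)) • q₂ = x := by
    rw [hq₁', hq₂']
    match_scalars <;> field_simp <;> ring
  have key := (aux_convexOn_infDist hLv hLn).le_on_segment' (mem_univ q₁) (mem_univ q₂)
    ha' hb' hab'
  rw [hcombo] at key
  rcases le_total (infDist q₁ L) (infDist q₂ L) with h | h
  · exact ⟨q₂, hq₂f, key.trans (by simp [max_eq_right h])⟩
  · exact ⟨q₁, hq₁f, key.trans (by simp [max_eq_left h])⟩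

open scoped RealInnerProductSpace in
/-- Key inequality: for `x` on the frontier of `K`, the distance to the frontier of `L`
is at most the Hausdorff distance of `K` and `L`. -/
theorem aux_infDist_frontier_le {F : Type*} [NormedAddCommGroup F] [InnerProductSpace ℝ F]
    [CompleteSpace F] {K L : Set F} (hKc : IsCompact K) (hKv : Convex ℝ K) (hKn : K.Nonempty)
    (hLc : IsCompact L) (hLn : L.Nonempty) (hKL : EMetric.hausdorffEdist K L ≠ ⊤)
    {x : F} (hx : x ∈ frontier K) :
    infDist x (frontier L) ≤ hausdorffDist K L := by
  have hxK : x ∈ K := hKc.isClosed.frontier_subset hx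
  by_cases hxL : x ∈ L
  · by_contra hcon
    push_neg at hcon
    set r := hausdorffDist K L with hr
    set ρ := infDist x (frontier L) with hρ
    have hr0 : 0 ≤ r := hausdorffDist_nonneg
    have hball : ball x ρ ⊆ L := by
      intro y hy
      by_contra hyL
      obtain ⟨q, hqf, hqseg⟩ := aux_exists_frontier_mem_segment hLc.isClosed hxL hyL
      have h1 : dist q x ≤ max (dist x x) (dist y x) :=
        (convexOn_univ_dist x).le_on_segment (mem_univ x) (mem_univ y) hqseg
      rw [dist_self] at h1
      have h1' : dist q x ≤ dist y x := le_trans h1 (max_le dist_nonneg (le_refl _))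
      have h2 : ρ ≤ dist x q := infDist_le_dist_of_mem hqf
      rw [dist_comm] at h2
      rw [mem_ball] at hy
      linarith
    have hxcl : x ∈ closure Kᶜ := by
      rw [closure_compl]
      exact hx.2
    obtain ⟨z, hzK, hzx⟩ := Metric.mem_closure_iff.1 hxcl (ρ - r) (by linarith)
    obtain ⟨f, u, hfK, hfz⟩ := geometric_hahn_banach_closed_point hKv hKc.isClosed hzK
    set v := (InnerProductSpace.toDual ℝ F).symm f with hv
    have hfv : ∀ w, f w = ⟪v, w⟫ := fun w => (InnerProductSpace.toDual_symm_apply).symm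
    have hvne : v ≠ 0 := by
      intro h0
      obtain ⟨k, hk⟩ := hKn
      have h1 := hfK k hk
      have h2 := hfz
      rw [hfv k, h0, inner_zero_left] at h1
      rw [hfv z, h0, inner_zero_left] at h2
      linarith
    have hnv : (0:ℝ) < ‖v‖ := norm_pos_iff.2 hvne
    set y := z + (r / ‖v‖) • v with hy
    have hyz : dist y z = r := by
      rw [hy, dist_eq_norm, add_sub_cancel_left, norm_smul, Real.norm_eq_abs,
        abs_of_nonneg (by positivity), div_mul_cancel₀ _ (ne_of_gt hnv)]
    have hyL : y ∈ L := by
      apply hball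
      rw [mem_ball]
      calc dist y x ≤ dist y z + dist z x := dist_triangle _ _ _
        _ < r + (ρ - r) := by
            rw [hyz, dist_comm z x]
            linarith
        _ = ρ := by ring
    obtain ⟨k, hkK, hkd⟩ := hKc.exists_infDist_eq_dist hKn y
    have hdk : dist y k ≤ r := by
      rw [← hkd]
      have h := infDist_le_hausdorffDist_of_mem hyL
        (by unfold EMetric.hausdorffEdist at *; rwa [EMetric.hausdorffEdist_comm] : EMetric.hausdorffEdist L K ≠ ⊤)
      rwa [hausdorffDist_comm] at h
    have h1 : f y = f z + r * ‖v‖ := by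
      rw [hfv, hfv, hy, inner_add_right, real_inner_smul_right, real_inner_self_eq_norm_sq]
      field_simp
    have h2 : f y - f k ≤ ‖v‖ * dist y k := by
      rw [hfv, hfv, ← inner_sub_right]
      calc ⟪v, y - k⟫ ≤ ‖v‖ * ‖y - k‖ := real_inner_le_norm _ _
        _ = ‖v‖ * dist y k := by rw [dist_eq_norm]
    have h3 : f k < u := hfK k hkK
    nlinarith [hfz, norm_nonneg v]
  · obtain ⟨p, hpL, hpd⟩ := hLc.exists_infDist_eq_dist hLn x
    obtain ⟨q, hqf, hqseg⟩ := aux_exists_frontier_mem_segment hLc.isClosed hpL hxL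
    have h1 : dist q x ≤ max (dist p x) (dist x x) :=
      (convexOn_univ_dist x).le_on_segment (mem_univ p) (mem_univ x) hqseg
    rw [dist_self] at h1
    have h1' : dist q x ≤ dist p x := le_trans h1 (max_le (le_refl _) dist_nonneg)
    calc infDist x (frontier L) ≤ dist x q := infDist_le_dist_of_mem hqf
      _ ≤ dist x p := by rw [dist_comm x q, dist_comm x p]; exact h1'
      _ = infDist x L := hpd.symm
      _ ≤ hausdorffDist K L := infDist_le_hausdorffDist_of_mem hxK hKL

/-- For `x ∈ K`, the distance to `L` is at most the Hausdorff distance of the frontiers. -/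
theorem aux_infDist_le_hausdorffDist_frontier {K L : Set E} (hKc : IsCompact K)
    (hKu : K ≠ univ) (hLc : IsCompact L) (hLv : Convex ℝ L) (hFLn : (frontier L).Nonempty)
    (hF : EMetric.hausdorffEdist (frontier K) (frontier L) ≠ ⊤) {x : E} (hx : x ∈ K) :
    infDist x L ≤ hausdorffDist (frontier K) (frontier L) := by
  have hLn : L.Nonempty := by
    obtain ⟨w, hw⟩ := hFLn
    exact ⟨w, hLc.isClosed.frontier_subset hw⟩
  obtain ⟨y, hyf, hxy⟩ := aux_exists_frontier_infDist_ge hKc hKu hLv hLn hx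
  calc infDist x L ≤ infDist y L := hxy
    _ ≤ infDist y (frontier L) :=
        infDist_le_infDist_of_subset hLc.isClosed.frontier_subset hFLn
    _ ≤ hausdorffDist (frontier K) (frontier L) := infDist_le_hausdorffDist_of_mem hyf hF


/-- the Hausdorff distance of two convex bodies equals that of their
boundaries. -/
theorem hausdorffDist_eq_hausdorffDist_frontier {d : ℕ} (K L : Set (Euc d))
    (hKc : IsCompact K) (hKv : Convex ℝ K) (hKi : (interior K).Nonempty)
    (hLc : IsCompact L) (hLv : Convex ℝ L) (hLi : (interior L).Nonempty) :
    hausdorffDist K L = hausdorffDist (frontier K) (frontier L) := by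
  have hKn : K.Nonempty := hKi.mono interior_subset
  have hLn : L.Nonempty := hLi.mono interior_subset
  rcases Nat.eq_zero_or_pos d with hd | hd
  · subst hd
    haveI : Subsingleton (Euc 0) := ⟨fun a b => by ext i; exact Fin.elim0 i⟩
    obtain ⟨a, ha⟩ := hKn
    obtain ⟨b, hb⟩ := hLn
    have hKL : K = L := by
      ext w
      constructor <;> intro _
      · rwa [Subsingleton.elim w b]
      · rwa [Subsingleton.elim w a]
    rw [hKL, hausdorffDist_self_zero, hausdorffDist_self_zero]
  · haveI : Nonempty (Fin d) := ⟨⟨0, hd⟩⟩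
    haveI : Nontrivial (Euc d) := by infer_instance
    have hKu : K ≠ univ := hKc.ne_univ
    have hLu : L ≠ univ := hLc.ne_univ
    have hFK : (frontier K).Nonempty := nonempty_frontier_iff.2 ⟨hKn, hKu⟩
    have hFL : (frontier L).Nonempty := nonempty_frontier_iff.2 ⟨hLn, hLu⟩
    have hFKc : IsCompact (frontier K) :=
      hKc.of_isClosed_subset isClosed_frontier hKc.isClosed.frontier_subset
    have hFLc : IsCompact (frontier L) :=
      hLc.of_isClosed_subset isClosed_frontier hLc.isClosed.frontier_subset
    have hEKL : EMetric.hausdorffEdist K L ≠ ⊤ :=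
      hausdorffEdist_ne_top_of_nonempty_of_bounded hKn hLn hKc.isBounded hLc.isBounded
    have hEF : EMetric.hausdorffEdist (frontier K) (frontier L) ≠ ⊤ :=
      hausdorffEdist_ne_top_of_nonempty_of_bounded hFK hFL hFKc.isBounded hFLc.isBounded
    apply le_antisymm
    · refine hausdorffDist_le_of_infDist hausdorffDist_nonneg
        (fun x hx => aux_infDist_le_hausdorffDist_frontier hKc hKu hLc hLv hFL hEF hx)
        (fun x hx => ?_)
      have h := aux_infDist_le_hausdorffDist_frontier hLc hLu hKc hKv hFK
        (by unfold EMetric.hausdorffEdist at *; rwa [EMetric.hausdorffEdist_comm] at hEF) hx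
      rwa [hausdorffDist_comm] at h
    · refine hausdorffDist_le_of_infDist hausdorffDist_nonneg
        (fun x hx => aux_infDist_frontier_le hKc hKv hKn hLc hLn hEKL hx)
        (fun x hx => ?_)
      have h := aux_infDist_frontier_le hLc hLv hLn hKc hKn
        (by unfold EMetric.hausdorffEdist at *; rwa [EMetric.hausdorffEdist_comm] at hEKL) hx
      rwa [hausdorffDist_comm] at h
end
end

section
/- Let T : X → X be a non-uniquely ergodic topological dynamical system on a compact metric space with dense set of periodic measures. Let F : X → ℝ^d be continuous, K ⊂ ℝ^d a nonempty compact convex set, and ε > 0 with d_H(R(F), K) ≤ ε. Then there exists a continuous F′ : X → ℝ^d with R(F′) ⊂ relint(K), ‖F − F′‖_∞ ≤ 2ε, and F′ is cohomologous to a continuous F″ whose image lies in the affine hull of K. -/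
open MeasureTheory Topology Metric Set Filter Function
open scoped ENNReal RealInnerProductSpace

noncomputable section

open scoped NNReal


namespace AdjAux

/-- Tiling of an interval by consecutive subintervals with prescribed lengths. -/
lemma tileN (g : ℕ → ℝ) (hg : ∀ c, 0 ≤ g c) :
    ∀ (Nm : ℕ) (b t : ℝ), b ≤ t → t < b + ∑ c ∈ Finset.range Nm, g c →
    ∃! c, c < Nm ∧ (b + ∑ c' ∈ Finset.range c, g c' ≤ t ∧
      t < b + (∑ c' ∈ Finset.range c, g c') + g c) := by
  intro Nm
  induction Nm with
  | zero => intro b t hb ht; simp only [Finset.range_zero, Finset.sum_empty, add_zero] at ht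
            exact absurd ht (not_lt.2 hb)
  | succ Nm ih =>
    intro b t hb ht
    have hsub : ∀ c : ℕ, c < Nm + 1 →
        (∑ c' ∈ Finset.range c, g c') + g c ≤ ∑ c' ∈ Finset.range (Nm + 1), g c' := by
      intro c hc
      rw [← Finset.sum_range_succ]
      exact Finset.sum_le_sum_of_subset_of_nonneg
        (Finset.range_subset_range.2 hc) (fun i _ _ => hg i)
    by_cases hlt : t < b + ∑ c ∈ Finset.range Nm, g c
    · obtain ⟨c, ⟨hc, h1, h2⟩, huniq⟩ := ih b t hb hlt
      refine ⟨c, ⟨Nat.lt_succ_of_lt hc, h1, h2⟩, ?_⟩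
      rintro c' ⟨hc', h1', h2'⟩
      rcases Nat.lt_succ_iff_lt_or_eq.1 hc' with h | rfl
      · exact huniq c' ⟨h, h1', h2'⟩
      · exact absurd hlt (not_lt.2 h1')
    · push_neg at hlt
      refine ⟨Nm, ⟨Nat.lt_succ_self _, hlt, by rw [Finset.sum_range_succ, ← add_assoc] at ht; exact ht⟩, ?_⟩
      rintro c' ⟨hc', h1', h2'⟩
      rcases Nat.lt_succ_iff_lt_or_eq.1 hc' with h | rfl
      · have : (∑ c' ∈ Finset.range c', g c') + g c' ≤ ∑ c' ∈ Finset.range Nm, g c' := by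
          rw [← Finset.sum_range_succ]
          exact Finset.sum_le_sum_of_subset_of_nonneg
            (Finset.range_subset_range.2 h) (fun i _ _ => hg i)
        exact absurd h2' (not_lt.2 (le_trans (by linarith) hlt))
      · rfl

variable {X : Type*}

/-- The level-`m` code (list of net indices, most recent first) of a point. -/
def codeN (s : ℕ → X → ℕ) : ℕ → X → List ℕ
  | 0, y => [s 0 y]
  | m+1, y => s (m+1) y :: codeN s m y

/-- The finite set of codes at level `m`. -/
def cellsN (N : ℕ → ℕ) : ℕ → Finset (List ℕ)
  | 0 => (Finset.range (N 0)).image (fun c => [c])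
  | m+1 => ((Finset.range (N (m+1))) ×ˢ cellsN N m).image (fun pr => pr.1 :: pr.2)

/-- Lower endpoint of the interval associated to a cell. -/
def lowEnd (N : ℕ → ℕ) (p : ℕ → List ℕ → ℝ) : ℕ → List ℕ → ℝ
  | 0, w => ∑ c ∈ Finset.range (w.headI), p 0 [c]
  | m+1, w => lowEnd N p m w.tail + ∑ c ∈ Finset.range (w.headI), p (m+1) (c :: w.tail)

lemma mem_cellsN_zero {N : ℕ → ℕ} {w : List ℕ} :
    w ∈ cellsN N 0 ↔ ∃ c, c < N 0 ∧ w = [c] := by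
  simp [cellsN, eq_comm]

lemma mem_cellsN_succ {N : ℕ → ℕ} {m : ℕ} {w : List ℕ} :
    w ∈ cellsN N (m+1) ↔ ∃ c w', c < N (m+1) ∧ w' ∈ cellsN N m ∧ w = c :: w' := by
  simp only [cellsN, Finset.mem_image, Finset.mem_product, Finset.mem_range, Prod.exists]
  constructor
  · rintro ⟨c, w', ⟨h1, h2⟩, rfl⟩; exact ⟨c, w', h1, h2, rfl⟩
  · rintro ⟨c, w', h1, h2, rfl⟩; exact ⟨c, w', ⟨h1, h2⟩, rfl⟩

lemma headI_codeN (s : ℕ → X → ℕ) (m : ℕ) (y : X) : (codeN s m y).headI = s m y := by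
  cases m <;> simp [codeN]

lemma codeN_mem {s : ℕ → X → ℕ} {N : ℕ → ℕ} (hs : ∀ m y, s m y < N m) (m : ℕ) (y : X) :
    codeN s m y ∈ cellsN N m := by
  induction m with
  | zero => exact mem_cellsN_zero.2 ⟨s 0 y, hs 0 y, rfl⟩
  | succ m ih => exact mem_cellsN_succ.2 ⟨s (m+1) y, codeN s m y, hs (m+1) y, ih, rfl⟩

section PartitionFacts

variable (N : ℕ → ℕ) (p : ℕ → List ℕ → ℝ)
variable (hp0 : ∀ m w, 0 ≤ p m w)
variable (hroot : ∑ c ∈ Finset.range (N 0), p 0 [c] = 1)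
variable (hchild : ∀ m w, ∑ c ∈ Finset.range (N (m+1)), p (m+1) (c :: w) = p m w)

include hp0 hroot hchild

omit hp0 hroot hchild in
include hchild in
lemma lowEnd_nest {m : ℕ} {w' : List ℕ} {c : ℕ} (hc : c < N (m+1)) (hp0 : ∀ m w, 0 ≤ p m w) :
    lowEnd N p m w' ≤ lowEnd N p (m+1) (c :: w') ∧
      lowEnd N p (m+1) (c :: w') + p (m+1) (c :: w') ≤ lowEnd N p m w' + p m w' := by
  constructor
  · simp only [lowEnd, List.tail_cons, List.headI_cons]
    have : (0:ℝ) ≤ ∑ c' ∈ Finset.range c, p (m+1) (c' :: w') :=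
      Finset.sum_nonneg fun i _ => hp0 _ _
    linarith
  · simp only [lowEnd, List.tail_cons, List.headI_cons]
    have h1 : (∑ c' ∈ Finset.range c, p (m+1) (c' :: w')) + p (m+1) (c :: w')
        ≤ ∑ c' ∈ Finset.range (N (m+1)), p (m+1) (c' :: w') := by
      rw [← Finset.sum_range_succ]
      exact Finset.sum_le_sum_of_subset_of_nonneg
        (Finset.range_subset_range.2 hc) (fun i _ _ => hp0 _ _)
    rw [hchild m w'] at h1
    linarith

omit hroot hchild in
lemma lowEnd_zero_bounds {c : ℕ} (hc : c < N 0) :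
    0 ≤ lowEnd N p 0 [c] ∧ lowEnd N p 0 [c] + p 0 [c] ≤ ∑ c' ∈ Finset.range (N 0), p 0 [c'] := by
  constructor
  · exact Finset.sum_nonneg fun i _ => hp0 _ _
  · simp only [lowEnd, List.headI_cons]
    rw [← Finset.sum_range_succ]
    exact Finset.sum_le_sum_of_subset_of_nonneg
      (Finset.range_subset_range.2 hc) (fun i _ _ => hp0 _ _)

lemma lowEnd_bounds : ∀ (m : ℕ) (w : List ℕ), w ∈ cellsN N m →
    0 ≤ lowEnd N p m w ∧ lowEnd N p m w + p m w ≤ 1 := by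
  intro m
  induction m with
  | zero =>
    intro w hw
    obtain ⟨c, hc, rfl⟩ := mem_cellsN_zero.1 hw
    have := lowEnd_zero_bounds N p hp0 hc
    rw [hroot] at this
    exact this
  | succ m ih =>
    intro w hw
    obtain ⟨c, w', hc, hw', rfl⟩ := mem_cellsN_succ.1 hw
    obtain ⟨ih1, ih2⟩ := ih w' hw'
    obtain ⟨n1, n2⟩ := lowEnd_nest N p hchild hc hp0 (w' := w')
    exact ⟨le_trans ih1 n1, le_trans n2 ih2⟩

/-- Each `t ∈ [0,1)` lies in exactly one cell interval at each level. -/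
lemma cell_partition : ∀ (m : ℕ) {t : ℝ}, t ∈ Set.Ico (0:ℝ) 1 →
    ∃! w, w ∈ cellsN N m ∧
      t ∈ Set.Ico (lowEnd N p m w) (lowEnd N p m w + p m w) := by
  intro m
  induction m with
  | zero =>
    intro t ht
    have h2 : t < 0 + ∑ c ∈ Finset.range (N 0), p 0 [c] := by rw [hroot]; simpa using ht.2
    obtain ⟨c, ⟨hc, h3, h4⟩, huniq⟩ :=
      tileN (fun c => p 0 [c]) (fun c => hp0 _ _) (N 0) 0 t ht.1 h2
    refine ⟨[c], ⟨mem_cellsN_zero.2 ⟨c, hc, rfl⟩, ?_, ?_⟩, ?_⟩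
    · simpa [lowEnd] using h3
    · simpa [lowEnd] using h4
    · rintro w ⟨hw, hw1, hw2⟩
      obtain ⟨c', hc', rfl⟩ := mem_cellsN_zero.1 hw
      have := huniq c' ⟨hc', by simpa [lowEnd] using hw1, by simpa [lowEnd] using hw2⟩
      rw [this]
  | succ m ih =>
    intro t ht
    obtain ⟨w', ⟨hw'mem, hw'1, hw'2⟩, huniq'⟩ := ih ht
    have hsum : ∑ c ∈ Finset.range (N (m+1)), p (m+1) (c :: w') = p m w' := hchild m w'
    have h2 : t < lowEnd N p m w' + ∑ c ∈ Finset.range (N (m+1)), p (m+1) (c :: w') := by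
      rw [hsum]; exact hw'2
    obtain ⟨c, ⟨hc, h3, h4⟩, huniq⟩ :=
      tileN (fun c => p (m+1) (c :: w')) (fun c => hp0 _ _) (N (m+1))
        (lowEnd N p m w') t hw'1 h2
    refine ⟨c :: w', ⟨mem_cellsN_succ.2 ⟨c, w', hc, hw'mem, rfl⟩, ?_, ?_⟩, ?_⟩
    · simpa [lowEnd] using h3
    · simpa [lowEnd, add_assoc] using h4
    · rintro w ⟨hw, hw1, hw2⟩
      obtain ⟨c₂, w₂, hc₂, hw₂mem, rfl⟩ := mem_cellsN_succ.1 hw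
      obtain ⟨n1, n2⟩ := lowEnd_nest N p hchild hc₂ hp0 (w' := w₂)
      have hw₂ : w₂ = w' := huniq' w₂ ⟨hw₂mem, le_trans n1 hw1, lt_of_lt_of_le hw2 n2⟩
      subst hw₂
      have := huniq c₂ ⟨hc₂, by simpa [lowEnd] using hw1, by simpa [lowEnd, add_assoc] using hw2⟩
      rw [this]

lemma cells_sum : ∀ m : ℕ, ∑ w ∈ cellsN N m, p m w = 1 := by
  intro m
  induction m with
  | zero =>
    rw [cellsN, Finset.sum_image (by intro a _ b _ h; simpa using h)]
    exact hroot
  | succ m ih =>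
    rw [cellsN, Finset.sum_image
      (by intro a _ b _ h; simp only [List.cons.injEq] at h; exact Prod.ext h.1 h.2)]
    rw [Finset.sum_product]
    calc ∑ c ∈ Finset.range (N (m+1)), ∑ w ∈ cellsN N m, p (m+1) (c :: w)
        = ∑ w ∈ cellsN N m, ∑ c ∈ Finset.range (N (m+1)), p (m+1) (c :: w) :=
          Finset.sum_comm
      _ = ∑ w ∈ cellsN N m, p m w := Finset.sum_congr rfl fun w _ => hchild m w
      _ = 1 := ih

end PartitionFacts



/-- Empirical frequency of the cylinder `w` along the orbit segment of length `n+1` of `x n`. -/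
def qFn (T : X → X) (x : ℕ → X) (s : ℕ → X → ℕ) (n m : ℕ) (w : List ℕ) : ℝ :=
  ((n : ℝ) + 1)⁻¹ * ∑ i ∈ Finset.range (n+1),
    (if codeN s m (T^[i] (x n)) = w then (1:ℝ) else 0)

lemma qFn_nonneg (T : X → X) (x : ℕ → X) (s : ℕ → X → ℕ) (n m : ℕ) (w : List ℕ) :
    0 ≤ qFn T x s n m w := by
  apply mul_nonneg (by positivity)
  exact Finset.sum_nonneg fun i _ => by positivity

lemma qFn_le_one (T : X → X) (x : ℕ → X) (s : ℕ → X → ℕ) (n m : ℕ) (w : List ℕ) :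
    qFn T x s n m w ≤ 1 := by
  have hpos : (0:ℝ) < (n : ℝ) + 1 := by positivity
  have hsum : ∑ i ∈ Finset.range (n+1),
      (if codeN s m (T^[i] (x n)) = w then (1:ℝ) else 0) ≤ (n+1 : ℕ) := by
    calc ∑ i ∈ Finset.range (n+1), (if codeN s m (T^[i] (x n)) = w then (1:ℝ) else 0)
        ≤ ∑ i ∈ Finset.range (n+1), (1:ℝ) :=
          Finset.sum_le_sum fun i _ => by split <;> norm_num
      _ = (n+1 : ℕ) := by simp
  rw [qFn]
  calc ((n : ℝ) + 1)⁻¹ * ∑ i ∈ Finset.range (n+1),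
        (if codeN s m (T^[i] (x n)) = w then (1:ℝ) else 0)
      ≤ ((n : ℝ) + 1)⁻¹ * ((n : ℝ) + 1) := by
        apply mul_le_mul_of_nonneg_left _ (by positivity)
        simpa using hsum
    _ = 1 := inv_mul_cancel₀ (ne_of_gt hpos)

variable {N : ℕ → ℕ} {s : ℕ → X → ℕ}

lemma qFn_root (T : X → X) (x : ℕ → X) (hs : ∀ m y, s m y < N m) (n : ℕ) :
    ∑ c ∈ Finset.range (N 0), qFn T x s n 0 [c] = 1 := by
  have hpos : ((n : ℝ) + 1) ≠ 0 := by positivity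
  simp only [qFn, ← Finset.mul_sum]
  rw [Finset.sum_comm]
  have : ∀ y : X, ∑ c ∈ Finset.range (N 0),
      (if codeN s 0 y = [c] then (1:ℝ) else 0) = 1 := by
    intro y
    have : ∀ c, (if codeN s 0 y = [c] then (1:ℝ) else 0) =
        (if c = s 0 y then (1:ℝ) else 0) := by
      intro c; simp [codeN, List.cons.injEq, eq_comm]
    simp only [this]
    simp [Finset.sum_ite_eq', Finset.mem_range, hs 0 y]
  simp only [this]
  simp [inv_mul_cancel₀ hpos]

lemma qFn_child (T : X → X) (x : ℕ → X) (hs : ∀ m y, s m y < N m) (n m : ℕ) (w : List ℕ) :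
    ∑ c ∈ Finset.range (N (m+1)), qFn T x s n (m+1) (c :: w) = qFn T x s n m w := by
  simp only [qFn, ← Finset.mul_sum]
  congr 1
  rw [Finset.sum_comm]
  apply Finset.sum_congr rfl
  intro i _
  set y := T^[i] (x n)
  by_cases hcw : codeN s m y = w
  · have : ∀ c, (if codeN s (m+1) y = c :: w then (1:ℝ) else 0) =
        (if c = s (m+1) y then (1:ℝ) else 0) := by
      intro c; simp [codeN, List.cons.injEq, hcw, eq_comm]
    simp only [this]
    simp [Finset.sum_ite_eq', Finset.mem_range, hs (m+1) y, hcw]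
  · have : ∀ c, (if codeN s (m+1) y = c :: w then (1:ℝ) else 0) = 0 := by
      intro c; simp [codeN, List.cons.injEq, hcw]
    simp only [this]
    simp [hcw]

/-- Ultrafilter limits of `[0,1]`-valued sequences exist. -/
lemma ulim_exists (U : Ultrafilter ℕ) {a : ℕ → ℝ} (h0 : ∀ n, 0 ≤ a n) (h1 : ∀ n, a n ≤ 1) :
    ∃ L, 0 ≤ L ∧ L ≤ 1 ∧ Filter.Tendsto a (U : Filter ℕ) (𝓝 L) := by
  have hle : ↑(U.map a) ≤ 𝓟 (Set.Icc (0:ℝ) 1) := by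
    rw [Ultrafilter.coe_map, Filter.le_principal_iff]
    exact Filter.mem_map.2 (Filter.univ_mem' fun n => ⟨h0 n, h1 n⟩)
  obtain ⟨L, hL, hconv⟩ := (isCompact_Icc (a := (0:ℝ)) (b := 1)).ultrafilter_le_nhds
    (U.map a) hle
  refine ⟨L, hL.1, hL.2, ?_⟩
  rwa [Filter.Tendsto, ← Ultrafilter.coe_map]


end AdjAux

section Part3
open AdjAux

variable {X : Type*} [MetricSpace X] [CompactSpace X] [MeasurableSpace X] [BorelSpace X]

lemma isProbabilityMeasure_nu : IsProbabilityMeasure (volume.restrict (Set.Ico (0:ℝ) 1)) := by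
  constructor
  rw [Measure.restrict_apply_univ, Real.volume_Ico]
  norm_num

lemma tendsto_avg_integral
    (T : X → X) (x : ℕ → X) (U : Ultrafilter ℕ)
    (N : ℕ → ℕ) (cent : ℕ → ℕ → X) (s : ℕ → X → ℕ)
    (hs : ∀ m y, s m y < N m ∧ dist y (cent m (s m y)) < (1/2 : ℝ)^m)
    (p : ℕ → List ℕ → ℝ)
    (hp0 : ∀ m w, 0 ≤ p m w)
    (hroot : ∑ c ∈ Finset.range (N 0), p 0 [c] = 1)
    (hchild : ∀ m w, ∑ c ∈ Finset.range (N (m+1)), p (m+1) (c :: w) = p m w)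
    (hpU : ∀ m w, Tendsto (fun n => qFn T x s n m w) (U : Filter ℕ) (𝓝 (p m w)))
    (W : ℕ → ℝ → List ℕ)
    (hW1 : ∀ m t, t ∈ Set.Ico (0:ℝ) 1 → W m t ∈ cellsN N m ∧
        t ∈ Set.Ico (lowEnd N p m (W m t)) (lowEnd N p m (W m t) + p m (W m t)))
    (G : ℝ → X) (hG : Measurable G)
    (hGm : ∀ m t, dist (cent m ((W m t).headI)) (G t) ≤ 3 * (1/2:ℝ)^m)
    {E : Type*} [NormedAddCommGroup E] [NormedSpace ℝ E] [SecondCountableTopology E]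
    [CompleteSpace E] (h : C(X, E)) :
    Tendsto (fun n : ℕ => ((n:ℝ)+1)⁻¹ • ∑ i ∈ Finset.range (n+1), h (T^[i] (x n)))
      (U : Filter ℕ) (𝓝 (∫ t in Set.Ico (0:ℝ) 1, h (G t) ∂volume)) := by
  borelize E
  have hs1 : ∀ m y, s m y < N m := fun m y => (hs m y).1
  haveI hnu : IsProbabilityMeasure (volume.restrict (Set.Ico (0:ℝ) 1)) :=
    isProbabilityMeasure_nu
  -- integrability of h ∘ G
  have hmeas : Measurable fun t => h (G t) := h.continuous.measurable.comp hG
  have hbd : ∀ y : X, ‖h y‖ ≤ ‖h‖ := fun y => h.norm_coe_le_norm y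
  have hint : IntegrableOn (fun t => h (G t)) (Set.Ico (0:ℝ) 1) volume := by
    refine ⟨hmeas.aestronglyMeasurable, ?_⟩
    exact MeasureTheory.HasFiniteIntegral.of_bounded
      (C := ‖h‖) (Filter.Eventually.of_forall fun t => hbd _)
  rw [Metric.tendsto_nhds]
  intro ε hε
  have hρ : 0 < ε/3 := by linarith
  obtain ⟨η, hη, hmod⟩ := Metric.uniformContinuous_iff.mp
    (CompactSpace.uniformContinuous_of_continuous h.continuous) (ε/3) hρ
  obtain ⟨m, hm⟩ : ∃ m : ℕ, 3 * (1/2:ℝ)^m < η := by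
    obtain ⟨m, hm⟩ := exists_pow_lt_of_lt_one (show (0:ℝ) < η/3 by linarith)
      (show (1/2 : ℝ) < 1 by norm_num)
    exact ⟨m, by linarith⟩
  -- the cell intervals at level m
  set I : List ℕ → Set ℝ := fun w => Set.Ico (lowEnd N p m w) (lowEnd N p m w + p m w) with hI
  have hIsub : ∀ w ∈ cellsN N m, I w ⊆ Set.Ico (0:ℝ) 1 := by
    intro w hw t ht
    obtain ⟨b1, b2⟩ := lowEnd_bounds N p hp0 hroot hchild m w hw
    exact ⟨le_trans b1 ht.1, lt_of_lt_of_le ht.2 b2⟩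
  have hWI : ∀ w ∈ cellsN N m, ∀ t ∈ I w, W m t = w := by
    intro w hw t ht
    obtain ⟨w₀, hw₀, huniq⟩ := cell_partition N p hp0 hroot hchild m (hIsub w hw ht)
    rw [huniq (W m t) (hW1 m t (hIsub w hw ht)), huniq w ⟨hw, ht⟩]
  have hcover : Set.Ico (0:ℝ) 1 = ⋃ w ∈ cellsN N m, I w := by
    ext t
    constructor
    · intro ht
      obtain ⟨w₀, hw₀, _⟩ := cell_partition N p hp0 hroot hchild m ht
      exact Set.mem_biUnion hw₀.1 hw₀.2
    · intro ht
      obtain ⟨w, hw, htw⟩ := Set.mem_iUnion₂.1 ht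
      exact hIsub w hw htw
  have hdisj : Set.Pairwise ↑(cellsN N m) (Disjoint on I) := by
    intro w hw w' hw' hne
    rw [Function.onFun, Set.disjoint_left]
    intro t ht ht'
    exact hne ((hWI w hw t ht).symm.trans (hWI w' hw' t ht'))
  -- step 1 : integral close to cell sum
  set S : E := ∑ w ∈ cellsN N m, p m w • h (cent m w.headI) with hS
  have hvolI : ∀ w, (volume (I w)).toReal = p m w := by
    intro w
    rw [hI]
    simp only [Real.volume_Ico, add_sub_cancel_left]
    exact ENNReal.toReal_ofReal (hp0 m w)
  have hvolIlt : ∀ w, volume (I w) < ⊤ := by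
    intro w
    rw [hI]; simp only [Real.volume_Ico]; exact ENNReal.ofReal_lt_top
  have step1 : ‖(∫ t in Set.Ico (0:ℝ) 1, h (G t) ∂volume) - S‖ ≤ ε/3 := by
    have hsplit : (∫ t in Set.Ico (0:ℝ) 1, h (G t) ∂volume)
        = ∑ w ∈ cellsN N m, ∫ t in I w, h (G t) ∂volume := by
      rw [hcover]
      exact MeasureTheory.integral_biUnion_finset (cellsN N m)
        (fun w _ => measurableSet_Ico) hdisj
        (fun w hw => hint.mono_set (hIsub w hw))
    rw [hsplit, hS, ← Finset.sum_sub_distrib]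
    refine le_trans (norm_sum_le _ _) ?_
    have hterm : ∀ w ∈ cellsN N m,
        ‖(∫ t in I w, h (G t) ∂volume) - p m w • h (cent m w.headI)‖ ≤ (ε/3) * p m w := by
      intro w hw
      have hconst : (∫ t in I w, h (cent m w.headI) ∂volume)
          = p m w • h (cent m w.headI) := by
        rw [setIntegral_const, measureReal_def, hvolI w]
      rw [← hconst, ← MeasureTheory.integral_sub (hint.mono_set (hIsub w hw))
        (MeasureTheory.integrableOn_const (hvolIlt w).ne)]
      have hb : ∀ t ∈ I w, ‖h (G t) - h (cent m w.headI)‖ ≤ ε/3 := by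
        intro t ht
        have hWt : W m t = w := hWI w hw t ht
        have hdist : dist (G t) (cent m w.headI) ≤ 3 * (1/2:ℝ)^m := by
          rw [← hWt]; rw [dist_comm]; exact hGm m t
        have hlt : dist (h (G t)) (h (cent m w.headI)) < ε/3 :=
          hmod (lt_of_le_of_lt hdist hm)
        rw [dist_eq_norm] at hlt
        exact le_of_lt hlt
      calc ‖∫ t in I w, (h (G t) - h (cent m w.headI)) ∂volume‖
          ≤ (ε/3) * (volume (I w)).toReal :=
            by
              have := norm_setIntegral_le_of_norm_le_const (hvolIlt w) hb
              rwa [measureReal_def] at this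
        _ = (ε/3) * p m w := by rw [hvolI w]
    calc ∑ w ∈ cellsN N m, ‖(∫ t in I w, h (G t) ∂volume) - p m w • h (cent m w.headI)‖
        ≤ ∑ w ∈ cellsN N m, (ε/3) * p m w := Finset.sum_le_sum hterm
      _ = (ε/3) * ∑ w ∈ cellsN N m, p m w := by rw [Finset.mul_sum]
      _ = ε/3 := by rw [cells_sum N p hp0 hroot hchild m]; ring
  -- step 2 : averages close to empirical cell sums
  have step2 : ∀ n : ℕ,
      ‖(((n:ℝ)+1)⁻¹ • ∑ i ∈ Finset.range (n+1), h (T^[i] (x n))) -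
        ∑ w ∈ cellsN N m, qFn T x s n m w • h (cent m w.headI)‖ ≤ ε/3 := by
    intro n
    have hplus : (0:ℝ) < (n:ℝ)+1 := by positivity
    have key : ∀ i : ℕ, ∑ w ∈ cellsN N m,
        (if codeN s m (T^[i] (x n)) = w then (1:ℝ) else 0) • h (cent m w.headI)
          = h (cent m (s m (T^[i] (x n)))) := by
      intro i
      simp only [ite_smul, one_smul, zero_smul, Finset.sum_ite_eq]
      rw [if_pos (codeN_mem hs1 m _), headI_codeN]
    have hgroup : ∑ w ∈ cellsN N m, qFn T x s n m w • h (cent m w.headI)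
        = ((n:ℝ)+1)⁻¹ • ∑ i ∈ Finset.range (n+1), h (cent m (s m (T^[i] (x n)))) := by
      simp only [qFn, mul_smul]
      rw [← Finset.smul_sum]
      congr 1
      simp only [Finset.sum_smul]
      rw [Finset.sum_comm]
      exact Finset.sum_congr rfl fun i _ => key i
    rw [hgroup, ← smul_sub, ← Finset.sum_sub_distrib]
    rw [norm_smul, Real.norm_eq_abs, abs_of_pos (inv_pos.2 hplus)]
    have hterm : ∀ i ∈ Finset.range (n+1),
        ‖h (T^[i] (x n)) - h (cent m (s m (T^[i] (x n))))‖ ≤ ε/3 := by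
      intro i _
      set y := T^[i] (x n)
      have h1 : dist y (cent m (s m y)) < η := by
        have := (hs m y).2
        have h3 : (1/2:ℝ)^m ≤ 3 * (1/2:ℝ)^m := by
          have : (0:ℝ) ≤ (1/2:ℝ)^m := by positivity
          linarith
        linarith
      have := hmod h1
      rw [dist_eq_norm] at this
      exact le_of_lt this
    calc ((n:ℝ)+1)⁻¹ * ‖∑ i ∈ Finset.range (n+1),
          (h (T^[i] (x n)) - h (cent m (s m (T^[i] (x n)))))‖
        ≤ ((n:ℝ)+1)⁻¹ * ∑ i ∈ Finset.range (n+1),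
            ‖h (T^[i] (x n)) - h (cent m (s m (T^[i] (x n))))‖ := by
          apply mul_le_mul_of_nonneg_left (norm_sum_le _ _) (by positivity)
      _ ≤ ((n:ℝ)+1)⁻¹ * (((n:ℝ)+1) * (ε/3)) := by
          apply mul_le_mul_of_nonneg_left _ (by positivity)
          calc ∑ i ∈ Finset.range (n+1), ‖h (T^[i] (x n)) - h (cent m (s m (T^[i] (x n))))‖
              ≤ ∑ _i ∈ Finset.range (n+1), (ε/3) := Finset.sum_le_sum hterm
            _ = ((n:ℝ)+1) * (ε/3) := by
                rw [Finset.sum_const, Finset.card_range, nsmul_eq_mul]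
                push_cast; ring
      _ = ε/3 := by field_simp
  -- step 3 : empirical cell sums converge along U
  have step3 : Tendsto (fun n => ∑ w ∈ cellsN N m, qFn T x s n m w • h (cent m w.headI))
      (U : Filter ℕ) (𝓝 S) :=
    tendsto_finset_sum _ (fun w _ => (hpU m w).smul_const _)
  have hev : ∀ᶠ n in (U : Filter ℕ),
      dist (∑ w ∈ cellsN N m, qFn T x s n m w • h (cent m w.headI)) S < ε/3 :=
    Metric.tendsto_nhds.mp step3 _ hρ
  filter_upwards [hev] with n hn
  have d1 : dist (((n:ℝ)+1)⁻¹ • ∑ i ∈ Finset.range (n+1), h (T^[i] (x n)))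
      (∑ w ∈ cellsN N m, qFn T x s n m w • h (cent m w.headI)) ≤ ε/3 := by
    rw [dist_eq_norm]; exact step2 n
  have d3 : dist S (∫ t in Set.Ico (0:ℝ) 1, h (G t) ∂volume) ≤ ε/3 := by
    rw [dist_eq_norm, norm_sub_rev]; exact step1
  calc dist (((n:ℝ)+1)⁻¹ • ∑ i ∈ Finset.range (n+1), h (T^[i] (x n)))
        (∫ t in Set.Ico (0:ℝ) 1, h (G t) ∂volume)
      ≤ dist (((n:ℝ)+1)⁻¹ • ∑ i ∈ Finset.range (n+1), h (T^[i] (x n)))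
          (∑ w ∈ cellsN N m, qFn T x s n m w • h (cent m w.headI))
        + dist (∑ w ∈ cellsN N m, qFn T x s n m w • h (cent m w.headI)) S
        + dist S (∫ t in Set.Ico (0:ℝ) 1, h (G t) ∂volume) := dist_triangle4 _ _ _ _
    _ < ε := by linarith

end Part3

section Part4
open AdjAux

variable {X : Type*} [MetricSpace X] [CompactSpace X] [MeasurableSpace X] [BorelSpace X]

lemma cont_integrable (g : C(X, ℝ)) (κ : Measure X) [IsFiniteMeasure κ] :
    Integrable (fun y => g y) κ := by
  refine ⟨g.continuous.measurable.aestronglyMeasurable, ?_⟩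
  exact MeasureTheory.HasFiniteIntegral.of_bounded
    (C := ‖g‖) (Filter.Eventually.of_forall fun y => g.norm_coe_le_norm y)

/-- Krylov–Bogolyubov along an ultrafilter: the limit of empirical averages of orbit
segments is realized by an invariant probability measure. -/
lemma kb_main (T : X → X) (hT : Continuous T) {d : ℕ} (F : C(X, Euc d))
    (x : ℕ → X) (U : Ultrafilter ℕ) (hU : (U : Filter ℕ) ≤ Filter.atTop) :
    ∃ μ : Measure X, IsProbabilityMeasure μ ∧ Measure.map T μ = μ ∧
      Tendsto (fun n : ℕ => ((n:ℝ)+1)⁻¹ • ∑ i ∈ Finset.range (n+1), F (T^[i] (x n)))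
        (U : Filter ℕ) (𝓝 (∫ y, F y ∂μ)) := by
  classical
  set x₀ := x 0 with hx₀
  -- construct the nets
  have hnet : ∀ m : ℕ, ∃ (Nm : ℕ) (c : ℕ → X),
      ∀ y : X, ∃ j, j < Nm ∧ dist y (c j) < (1/2:ℝ)^m := by
    intro m
    have hpos : (0:ℝ) < (1/2)^m := by positivity
    obtain ⟨t, -, htfin, hcov⟩ := finite_cover_balls_of_compact (isCompact_univ : IsCompact (Set.univ : Set X)) hpos
    set lst := htfin.toFinset.toList with hlst
    refine ⟨lst.length, fun j => lst.getD j x₀, fun y => ?_⟩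
    obtain ⟨z, hz, hyz⟩ := Set.mem_iUnion₂.1 (hcov (Set.mem_univ y))
    have hzl : z ∈ lst := by
      rw [hlst, Finset.mem_toList, Set.Finite.mem_toFinset]; exact hz
    obtain ⟨j, hj, hje⟩ := List.getElem_of_mem hzl
    refine ⟨j, hj, ?_⟩
    have hzz : lst.getD j x₀ = z := by rw [List.getD_eq_getElem lst x₀ hj, hje]
    show dist y (lst.getD j x₀) < (1/2:ℝ)^m
    rw [hzz]
    exact mem_ball.1 hyz
  choose NN cent hNC using hnet
  choose s hs1 hs2 using fun m (y : X) => hNC m y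
  have hs : ∀ m y, s m y < NN m ∧ dist y (cent m (s m y)) < (1/2:ℝ)^m :=
    fun m y => ⟨hs1 m y, hs2 m y⟩
  -- cylinder masses as ultrafilter limits
  choose p hp0 hp1 hpU using fun m (w : List ℕ) =>
    ulim_exists U (fun n => qFn_nonneg T x s n m w) (fun n => qFn_le_one T x s n m w)
  have hroot : ∑ c ∈ Finset.range (NN 0), p 0 [c] = 1 := by
    have h1 : Tendsto (fun n => ∑ c ∈ Finset.range (NN 0), qFn T x s n 0 [c])
        (U : Filter ℕ) (𝓝 (∑ c ∈ Finset.range (NN 0), p 0 [c])) :=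
      tendsto_finset_sum _ (fun c _ => hpU 0 [c])
    have h2 : (fun n => ∑ c ∈ Finset.range (NN 0), qFn T x s n 0 [c]) = fun _ => (1:ℝ) :=
      funext fun n => qFn_root T x hs1 n
    rw [h2] at h1
    exact tendsto_nhds_unique h1 tendsto_const_nhds
  have hchild : ∀ m w, ∑ c ∈ Finset.range (NN (m+1)), p (m+1) (c :: w) = p m w := by
    intro m w
    have h1 : Tendsto (fun n => ∑ c ∈ Finset.range (NN (m+1)), qFn T x s n (m+1) (c :: w))
        (U : Filter ℕ) (𝓝 (∑ c ∈ Finset.range (NN (m+1)), p (m+1) (c :: w))) :=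
      tendsto_finset_sum _ (fun c _ => hpU (m+1) (c :: w))
    have h2 : (fun n => ∑ c ∈ Finset.range (NN (m+1)), qFn T x s n (m+1) (c :: w))
        = fun n => qFn T x s n m w := funext fun n => qFn_child T x hs1 n m w
    rw [h2] at h1
    exact tendsto_nhds_unique h1 (hpU m w)
  have hpart : ∀ (m : ℕ) {t : ℝ}, t ∈ Set.Ico (0:ℝ) 1 → ∃! w, w ∈ cellsN NN m ∧
      t ∈ Set.Ico (lowEnd NN p m w) (lowEnd NN p m w + p m w) :=
    cell_partition NN p hp0 hroot hchild
  -- the digit functions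
  set W : ℕ → ℝ → List ℕ := fun m t =>
    if ht : t ∈ Set.Ico (0:ℝ) 1 then (hpart m ht).exists.choose else codeN s m x₀ with hWdef
  have hW1 : ∀ m t, ∀ ht : t ∈ Set.Ico (0:ℝ) 1, W m t ∈ cellsN NN m ∧
      t ∈ Set.Ico (lowEnd NN p m (W m t)) (lowEnd NN p m (W m t) + p m (W m t)) := by
    intro m t ht
    rw [hWdef]
    simp only [dif_pos ht]
    exact (hpart m ht).exists.choose_spec
  have hW2 : ∀ m t, t ∉ Set.Ico (0:ℝ) 1 → W m t = codeN s m x₀ := by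
    intro m t ht
    rw [hWdef]; simp only [dif_neg ht]
  -- successive digit centers are geometrically close
  have hstep : ∀ t (m : ℕ),
      dist (cent m ((W m t).headI)) (cent (m+1) ((W (m+1) t).headI)) ≤ (3/2) * (1/2:ℝ)^m := by
    intro t m
    have hpow : (0:ℝ) ≤ (1/2:ℝ)^m := by positivity
    have hhalf : (1/2:ℝ)^(m+1) = (1/2) * (1/2:ℝ)^m := by rw [pow_succ]; ring
    by_cases ht : t ∈ Set.Ico (0:ℝ) 1
    · obtain ⟨hmem1, hint1⟩ := hW1 (m+1) t ht
      obtain ⟨c, w', hc, hw', hcw⟩ := mem_cellsN_succ.1 hmem1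
      rw [hcw] at hint1
      have hnest := lowEnd_nest NN p hchild hc hp0 (w' := w')
      have hparent : t ∈ Set.Ico (lowEnd NN p m w') (lowEnd NN p m w' + p m w') :=
        ⟨le_trans hnest.1 hint1.1, lt_of_lt_of_le hint1.2 hnest.2⟩
      have hWm : W m t = w' :=
        (hpart m ht).unique ⟨(hW1 m t ht).1, (hW1 m t ht).2⟩ ⟨hw', hparent⟩
      have hppos : 0 < p (m+1) (c :: w') := by
        have h1 := hint1.1; have h2 := hint1.2; linarith
      obtain ⟨n, hn⟩ : ∃ n, 0 < qFn T x s n (m+1) (c :: w') :=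
        ((hpU (m+1) (c :: w')).eventually_const_lt hppos).exists
      have hsumpos : ∑ i ∈ Finset.range (n+1),
          (if codeN s (m+1) (T^[i] (x n)) = c :: w' then (1:ℝ) else 0) ≠ 0 := by
        intro hzero
        rw [qFn, hzero, mul_zero] at hn
        exact lt_irrefl 0 hn
      obtain ⟨i, -, hi⟩ := Finset.exists_ne_zero_of_sum_ne_zero hsumpos
      set y := T^[i] (x n) with hy
      have hcode : codeN s (m+1) y = c :: w' := by
        by_contra hcon
        rw [if_neg hcon] at hi
        exact hi rfl
      have hc1 : s (m+1) y = c ∧ codeN s m y = w' := by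
        simp only [codeN, List.cons.injEq] at hcode
        exact hcode
      have hhead1 : (W m t).headI = s m y := by
        rw [hWm, ← hc1.2, headI_codeN]
      have hhead2 : (W (m+1) t).headI = s (m+1) y := by
        rw [hcw, List.headI_cons, hc1.1]
      rw [hhead1, hhead2]
      calc dist (cent m (s m y)) (cent (m+1) (s (m+1) y))
          ≤ dist (cent m (s m y)) y + dist y (cent (m+1) (s (m+1) y)) :=
            dist_triangle _ _ _
        _ ≤ (1/2:ℝ)^m + (1/2:ℝ)^(m+1) := by
            rw [dist_comm (cent m (s m y)) y]
            exact add_le_add (le_of_lt (hs m y).2) (le_of_lt (hs (m+1) y).2)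
        _ ≤ (3/2) * (1/2:ℝ)^m := by rw [hhalf]; linarith
    · have hj1 : W m t = codeN s m x₀ := hW2 m t ht
      have hj2 : W (m+1) t = codeN s (m+1) x₀ := hW2 (m+1) t ht
      rw [hj1, hj2, headI_codeN, headI_codeN]
      calc dist (cent m (s m x₀)) (cent (m+1) (s (m+1) x₀))
          ≤ dist (cent m (s m x₀)) x₀ + dist x₀ (cent (m+1) (s (m+1) x₀)) := dist_triangle _ _ _
        _ ≤ (1/2:ℝ)^m + (1/2:ℝ)^(m+1) := by
            rw [dist_comm (cent m (s m x₀)) x₀]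
            exact add_le_add (le_of_lt (hs m x₀).2) (le_of_lt (hs (m+1) x₀).2)
        _ ≤ (3/2) * (1/2:ℝ)^m := by rw [hhalf]; linarith
  -- the limit map G
  have hcauchy : ∀ t : ℝ, ∃ z : X, Tendsto (fun m => cent m ((W m t).headI)) atTop (𝓝 z) := by
    intro t
    apply cauchySeq_tendsto_of_complete
    exact cauchySeq_of_le_geometric (1/2 : ℝ) (3/2) (by norm_num) (fun m => hstep t m)
  choose G hGt using hcauchy
  have hGm : ∀ (m : ℕ) (t : ℝ), dist (cent m ((W m t).headI)) (G t) ≤ 3 * (1/2:ℝ)^m := by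
    intro m t
    have h1 := dist_le_of_le_geometric_of_tendsto (1/2 : ℝ) (3/2)
      (by norm_num) (fun m => hstep t m) (hGt t) m
    have h2 : (3/2:ℝ) * (1/2)^m / (1 - 1/2) = 3 * (1/2)^m := by ring
    rwa [h2] at h1
  -- measurability
  have hGmmeas : ∀ m : ℕ, Measurable (fun t => cent m ((W m t).headI)) := by
    intro m
    have hcnt : Measurable (cent m) := measurable_from_top
    apply hcnt.comp
    apply measurable_to_countable' (f := fun t => (W m t).headI)
    intro c
    have hset : (fun t => (W m t).headI) ⁻¹' {c} =
        (⋃ w ∈ (cellsN NN m).filter (fun w => w.headI = c),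
          Set.Ico (lowEnd NN p m w) (lowEnd NN p m w + p m w)) ∪
        (if (codeN s m x₀).headI = c then (Set.Ico (0:ℝ) 1)ᶜ else ∅) := by
      ext t
      simp only [Set.mem_preimage, Set.mem_singleton_iff, Set.mem_union, Set.mem_iUnion,
        Finset.mem_filter, exists_prop]
      constructor
      · intro hc
        by_cases ht : t ∈ Set.Ico (0:ℝ) 1
        · exact Or.inl ⟨W m t, ⟨(hW1 m t ht).1, hc⟩, (hW1 m t ht).2⟩
        · right
          rw [hW2 m t ht] at hc
          rw [if_pos hc]
          exact ht
      · rintro (⟨w, ⟨hw, hwc⟩, htw⟩ | hjunk)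
        · obtain ⟨b1, b2⟩ := lowEnd_bounds NN p hp0 hroot hchild m w hw
          have ht : t ∈ Set.Ico (0:ℝ) 1 := ⟨le_trans b1 htw.1, lt_of_lt_of_le htw.2 b2⟩
          have hWt : W m t = w :=
            (hpart m ht).unique ⟨(hW1 m t ht).1, (hW1 m t ht).2⟩ ⟨hw, htw⟩
          rw [hWt]; exact hwc
        · by_cases hcc : (codeN s m x₀).headI = c
          · rw [if_pos hcc] at hjunk
            rw [hW2 m t hjunk, hcc]
          · rw [if_neg hcc] at hjunk
            exact absurd hjunk (Set.notMem_empty t)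
    rw [hset]
    apply MeasurableSet.union
    · exact Finset.measurableSet_biUnion _ (fun w _ => measurableSet_Ico)
    · split
      · exact measurableSet_Ico.compl
      · exact MeasurableSet.empty
  have hGmeas : Measurable G :=
    measurable_of_tendsto_metrizable' atTop hGmmeas
      (tendsto_pi_nhds.2 fun t => hGt t)
  -- the invariant measure
  set ν : Measure ℝ := volume.restrict (Set.Ico (0:ℝ) 1) with hν
  haveI : IsProbabilityMeasure ν := isProbabilityMeasure_nu
  set μ : Measure X := Measure.map G ν with hμ
  haveI hμprob : IsProbabilityMeasure μ := Measure.isProbabilityMeasure_map hGmeas.aemeasurable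
  -- the master convergence statement
  have master : ∀ {E : Type} [NormedAddCommGroup E] [NormedSpace ℝ E]
      [SecondCountableTopology E] [CompleteSpace E] (h : C(X, E)),
      Tendsto (fun n : ℕ => ((n:ℝ)+1)⁻¹ • ∑ i ∈ Finset.range (n+1), h (T^[i] (x n)))
        (U : Filter ℕ) (𝓝 (∫ t in Set.Ico (0:ℝ) 1, h (G t) ∂volume)) := by
    intro E _ _ _ _ h
    exact tendsto_avg_integral T x U NN cent s hs p hp0 hroot hchild hpU W
      (fun m t ht => hW1 m t ht) G hGmeas hGm h
  have hmap : ∀ {E : Type} [NormedAddCommGroup E] [NormedSpace ℝ E]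
      [SecondCountableTopology E] [CompleteSpace E] (h : C(X, E)),
      ∫ y, h y ∂μ = ∫ t in Set.Ico (0:ℝ) 1, h (G t) ∂volume := by
    intro E _ _ _ _ h
    rw [hμ]
    exact integral_map hGmeas.aemeasurable h.continuous.aestronglyMeasurable
  refine ⟨μ, hμprob, ?_, ?_⟩
  · -- invariance
    haveI : IsProbabilityMeasure (Measure.map T μ) :=
      Measure.isProbabilityMeasure_map (hT.measurable.aemeasurable)
    apply ext_of_forall_lintegral_eq_of_IsFiniteMeasure
    intro f
    set g : C(X, ℝ) := ⟨fun y => (f y : ℝ), NNReal.continuous_coe.comp f.continuous⟩ with hg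
    set gT : C(X, ℝ) := ⟨fun y => g (T y), g.continuous.comp hT⟩ with hgT
    have hdiff : Tendsto (fun n : ℕ =>
        (((n:ℝ)+1)⁻¹ • ∑ i ∈ Finset.range (n+1), gT (T^[i] (x n))) -
        (((n:ℝ)+1)⁻¹ • ∑ i ∈ Finset.range (n+1), g (T^[i] (x n))))
        (U : Filter ℕ) (𝓝 0) := by
      have hid : ∀ n : ℕ,
          (((n:ℝ)+1)⁻¹ • ∑ i ∈ Finset.range (n+1), gT (T^[i] (x n))) -
          (((n:ℝ)+1)⁻¹ • ∑ i ∈ Finset.range (n+1), g (T^[i] (x n)))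
          = ((n:ℝ)+1)⁻¹ • (g (T^[n+1] (x n)) - g (x n)) := by
        intro n
        rw [← smul_sub]
        congr 1
        have hsum : ∑ i ∈ Finset.range (n+1), gT (T^[i] (x n))
            = ∑ i ∈ Finset.range (n+1), g (T^[i+1] (x n)) := by
          apply Finset.sum_congr rfl
          intro i _
          rw [hgT]
          simp only [ContinuousMap.coe_mk]
          rw [Function.iterate_succ_apply' T i (x n)]
        rw [hsum]
        have h1 : ∑ i ∈ Finset.range (n+2), g (T^[i] (x n))
            = (∑ i ∈ Finset.range (n+1), g (T^[i+1] (x n))) + g (T^[0] (x n)) :=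
          Finset.sum_range_succ' _ _
        have h2 : ∑ i ∈ Finset.range (n+2), g (T^[i] (x n))
            = (∑ i ∈ Finset.range (n+1), g (T^[i] (x n))) + g (T^[n+1] (x n)) :=
          Finset.sum_range_succ _ _
        have := h1.symm.trans h2
        simp only [Function.iterate_zero_apply] at this
        linarith [this]
      rw [funext hid]
      have hbd : Tendsto (fun n : ℕ => ((n:ℝ)+1)⁻¹ * (2 * ‖g‖)) atTop (𝓝 0) := by
        have h0 : Tendsto (fun n : ℕ => ((n:ℝ)+1)⁻¹) atTop (𝓝 0) := by
          have := tendsto_one_div_add_atTop_nhds_zero_nat (𝕜 := ℝ)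
          simpa only [one_div] using this
        have := h0.mul_const (2 * ‖g‖)
        simpa using this
      apply squeeze_zero_norm _ (hbd.mono_left hU)
      intro n
      rw [norm_smul, Real.norm_eq_abs, abs_of_pos (by positivity : (0:ℝ) < ((n:ℝ)+1)⁻¹)]
      apply mul_le_mul_of_nonneg_left _ (by positivity)
      calc ‖g (T^[n+1] (x n)) - g (x n)‖
          ≤ ‖g (T^[n+1] (x n))‖ + ‖g (x n)‖ := norm_sub_le _ _
        _ ≤ ‖g‖ + ‖g‖ := add_le_add (g.norm_coe_le_norm _) (g.norm_coe_le_norm _)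
        _ = 2 * ‖g‖ := by ring
    have hTlim : Tendsto (fun n : ℕ =>
        ((n:ℝ)+1)⁻¹ • ∑ i ∈ Finset.range (n+1), gT (T^[i] (x n)))
        (U : Filter ℕ) (𝓝 (∫ t in Set.Ico (0:ℝ) 1, g (G t) ∂volume)) := by
      have := (master g).add hdiff
      simp only [add_sub_cancel, add_zero] at this
      exact this
    have hinveq : ∫ t in Set.Ico (0:ℝ) 1, gT (G t) ∂volume
        = ∫ t in Set.Ico (0:ℝ) 1, g (G t) ∂volume :=
      tendsto_nhds_unique (master gT) hTlim
    have hint1 : ∫ y, g y ∂(Measure.map T μ) = ∫ y, g y ∂μ := by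
      have e1 : ∫ y, g y ∂(Measure.map T μ) = ∫ y, g (T y) ∂μ :=
        integral_map hT.measurable.aemeasurable g.continuous.aestronglyMeasurable
      have e2 : ∫ y, g (T y) ∂μ = ∫ y, gT y ∂μ := rfl
      rw [e1, e2, hmap gT, hmap g, hinveq]
    have hnn : ∀ (κ : Measure X), (0:X → ℝ) ≤ᵐ[κ] fun y => g y :=
      fun κ => Filter.Eventually.of_forall fun y => (f y).2
    have lhs : ∫⁻ y, (f y : ℝ≥0∞) ∂(Measure.map T μ)
        = ENNReal.ofReal (∫ y, g y ∂(Measure.map T μ)) := by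
      rw [MeasureTheory.ofReal_integral_eq_lintegral_ofReal
        (cont_integrable g _) (hnn _)]
      congr 1
      ext y
      exact (ENNReal.ofReal_coe_nnreal).symm ▸ rfl
    have rhs : ∫⁻ y, (f y : ℝ≥0∞) ∂μ = ENNReal.ofReal (∫ y, g y ∂μ) := by
      rw [MeasureTheory.ofReal_integral_eq_lintegral_ofReal
        (cont_integrable g _) (hnn _)]
      congr 1
      ext y
      exact (ENNReal.ofReal_coe_nnreal).symm ▸ rfl
    rw [lhs, rhs, hint1]
  · rw [hmap F]
    exact master F

end Part4

section Part5
open AdjAux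

variable {X : Type*} [MetricSpace X] [CompactSpace X] [MeasurableSpace X] [BorelSpace X]

/-- Birkhoff averages get uniformly close to the rotation set. -/
lemma avg_close (T : X → X) (hT : Continuous T) {d : ℕ} (F : C(X, Euc d))
    {δ : ℝ} (hδ : 0 < δ) :
    ∃ n : ℕ, ∀ y : X,
      infDist (((n:ℝ)+1)⁻¹ • ∑ i ∈ Finset.range (n+1), F (T^[i] y)) (rotSet T F) < δ := by
  by_contra hcon
  push_neg at hcon
  choose x hx using hcon
  obtain ⟨U, hU⟩ := Filter.exists_ultrafilter_le (Filter.atTop : Filter ℕ)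
  obtain ⟨μ, hμp, hμinv, hμlim⟩ := kb_main T hT F x U hU
  have hmem : (∫ y, F y ∂μ) ∈ rotSet T F := ⟨μ, hμp, hμinv, rfl⟩
  have h0 : infDist (∫ y, F y ∂μ) (rotSet T F) = 0 := infDist_zero_of_mem hmem
  have hcont : Tendsto (fun n : ℕ =>
      infDist (((n:ℝ)+1)⁻¹ • ∑ i ∈ Finset.range (n+1), F (T^[i] (x n))) (rotSet T F))
      (U : Filter ℕ) (𝓝 0) := by
    rw [← h0]
    exact ((continuous_infDist_pt _).tendsto _).comp hμlim
  have hle : δ ≤ 0 := ge_of_tendsto hcont (Filter.Eventually.of_forall fun n => hx n)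
  linarith

end Part5

section Part6

/-- Continuous 1-Lipschitz metric projection onto a nonempty compact convex subset
of a Euclidean space. -/
lemma exists_proj {d : ℕ} {C : Set (Euc d)} (hne : C.Nonempty) (hc : IsCompact C)
    (hv : Convex ℝ C) :
    ∃ proj : Euc d → Euc d, Continuous proj ∧ (∀ z, proj z ∈ C) ∧
      ∀ z w, w ∈ C → ‖z - proj z‖ ≤ ‖z - w‖ := by
  have hcomplete : IsComplete C := hc.isComplete
  choose proj hmem hdist using exists_norm_eq_iInf_of_complete_convex hne hcomplete hv
  have hle : ∀ z w, w ∈ C → ‖z - proj z‖ ≤ ‖z - w‖ := by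
    intro z w hw
    rw [hdist z]
    exact ciInf_le ⟨0, by rintro r ⟨w', rfl⟩; exact norm_nonneg _⟩ (⟨w, hw⟩ : C)
  have hchar : ∀ z, ∀ w ∈ C, (inner ℝ (z - proj z) (w - proj z) : ℝ) ≤ 0 := fun z =>
    (norm_eq_iInf_iff_real_inner_le_zero hv (hmem z)).1 (hdist z)
  have hlip : ∀ z z', ‖proj z - proj z'‖ ≤ ‖z - z'‖ := by
    intro z z'
    set a := proj z
    set b := proj z'
    have h1 : (inner ℝ (z - a) (b - a) : ℝ) ≤ 0 := hchar z b (hmem z')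
    have h2 : (inner ℝ (z' - b) (a - b) : ℝ) ≤ 0 := hchar z' a (hmem z)
    have h2' : (inner ℝ (b - z') (b - a) : ℝ) ≤ 0 := by
      have e1 : b - z' = -(z' - b) := by abel
      have e2 : b - a = -(a - b) := by abel
      rw [e1, e2, inner_neg_neg]
      exact h2
    have hkey : ‖b - a‖^2 ≤ (inner ℝ (z' - z) (b - a) : ℝ) := by
      have e : (inner ℝ (z - z') (b - a) : ℝ) + (inner ℝ (b - a) (b - a) : ℝ)
          = (inner ℝ (z - a) (b - a) : ℝ) + (inner ℝ (b - z') (b - a) : ℝ) := by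
        rw [← inner_add_left, ← inner_add_left]
        congr 1
        abel
      have hsq : (inner ℝ (b - a) (b - a) : ℝ) = ‖b - a‖^2 := real_inner_self_eq_norm_sq _
      have hneg : (inner ℝ (z' - z) (b - a) : ℝ) = -(inner ℝ (z - z') (b - a) : ℝ) := by
        have : z' - z = -(z - z') := by abel
        rw [this, inner_neg_left]
      rw [hneg]
      rw [hsq] at e
      linarith
    have hcs : (inner ℝ (z' - z) (b - a) : ℝ) ≤ ‖z' - z‖ * ‖b - a‖ := real_inner_le_norm _ _
    by_cases hba : ‖b - a‖ = 0
    · have : ‖a - b‖ = 0 := by rwa [norm_sub_rev]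
      rw [this]
      exact norm_nonneg _
    · have hba' : 0 < ‖b - a‖ := lt_of_le_of_ne (norm_nonneg _) (Ne.symm hba)
      have : ‖b - a‖ ≤ ‖z' - z‖ := by nlinarith
      calc ‖a - b‖ = ‖b - a‖ := norm_sub_rev _ _
        _ ≤ ‖z' - z‖ := this
        _ = ‖z - z'‖ := norm_sub_rev _ _
  refine ⟨proj, ?_, hmem, hle⟩
  have : LipschitzWith 1 proj := by
    apply LipschitzWith.of_dist_le_mul
    intro z z'
    rw [NNReal.coe_one, one_mul, dist_eq_norm, dist_eq_norm]
    exact hlip z z'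
  exact this.continuous

lemma intrinsic_mem_of_ball {d : ℕ} {K : Set (Euc d)} {z : Euc d}
    (hz : z ∈ affineSpan ℝ K) {ρ : ℝ} (hρ : 0 < ρ)
    (hball : ∀ u : Euc d, u ∈ affineSpan ℝ K → dist u z < ρ → u ∈ K) :
    z ∈ intrinsicInterior ℝ K := by
  refine mem_intrinsicInterior.2 ⟨⟨z, hz⟩, ?_, rfl⟩
  rw [mem_interior_iff_mem_nhds, Metric.mem_nhds_iff]
  refine ⟨ρ, hρ, fun u hu => ?_⟩
  rw [Metric.mem_ball, Subtype.dist_eq] at hu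
  exact hball ↑u u.2 hu

lemma intrinsic_ball_of_mem {d : ℕ} {K : Set (Euc d)} {v : Euc d}
    (hv : v ∈ intrinsicInterior ℝ K) :
    ∃ r > 0, ∀ u : Euc d, u ∈ affineSpan ℝ K → dist u v < r → u ∈ K := by
  obtain ⟨y, hy, hyv⟩ := mem_intrinsicInterior.1 hv
  rw [mem_interior_iff_mem_nhds, Metric.mem_nhds_iff] at hy
  obtain ⟨r, hr, hsub⟩ := hy
  refine ⟨r, hr, fun u hu hdist => ?_⟩
  have : (⟨u, hu⟩ : affineSpan ℝ K) ∈ Metric.ball y r := by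
    rw [Metric.mem_ball, Subtype.dist_eq]
    show dist u ↑y < r
    rw [hyv]
    exact hdist
  exact hsub this

end Part6

section Part6b
open AdjAux

lemma contE_integrable {X : Type*} [MetricSpace X] [CompactSpace X] [MeasurableSpace X]
    [BorelSpace X] {E : Type*} [NormedAddCommGroup E] [NormedSpace ℝ E]
    [SecondCountableTopology E] (g : C(X, E)) (κ : MeasureTheory.Measure X)
    [MeasureTheory.IsFiniteMeasure κ] : MeasureTheory.Integrable (fun y => g y) κ := by
  borelize E
  refine ⟨g.continuous.measurable.aestronglyMeasurable, ?_⟩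
  exact MeasureTheory.HasFiniteIntegral.of_bounded
    (C := ‖g‖) (Filter.Eventually.of_forall fun y => g.norm_coe_le_norm y)

theorem adjustment_lemma' {d : ℕ} {X : Type*} [MetricSpace X] [CompactSpace X]
    [MeasurableSpace X] [BorelSpace X] (T : X → X) (hT : Continuous T)
    (hne : ∃ μ : Measure X, IsProbabilityMeasure μ ∧ Measure.map T μ = μ)
    (F : C(X, Euc d)) (K : Set (Euc d)) (hKne : K.Nonempty) (hKc : IsCompact K)
    (hKv : Convex ℝ K) (ε : ℝ) (hε : 0 < ε) (hd : hausdorffDist (rotSet T F) K ≤ ε) :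
    ∃ F' : C(X, Euc d),
      rotSet T F' ⊆ intrinsicInterior ℝ K ∧
      ‖F - F'‖ ≤ 2 * ε ∧
      ∃ F'' H : C(X, Euc d), (∀ x : X, F' x - F'' x = H x - H (T x)) ∧
        range F'' ⊆ (affineSpan ℝ K : Set (Euc d)) := by
  classical
  obtain ⟨μ₀, hμ₀p, hμ₀i⟩ := hne
  -- rotation set is nonempty and bounded
  set R := rotSet T F with hR
  have hw₀ : (∫ y, F y ∂μ₀) ∈ R := ⟨μ₀, hμ₀p, hμ₀i, rfl⟩
  have hRne : R.Nonempty := ⟨_, hw₀⟩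
  have hRbdd : Bornology.IsBounded R := by
    apply (Metric.isBounded_closedBall (x := (0 : Euc d)) (r := ‖F‖)).subset
    rintro w ⟨μ, hμp, hμi, rfl⟩
    rw [Metric.mem_closedBall, dist_zero_right]
    haveI := hμp
    have hb := norm_integral_le_of_norm_le_const (μ := μ)
      (Filter.Eventually.of_forall fun y => F.norm_coe_le_norm y)
    simpa [measure_univ] using hb
  have hedist : EMetric.hausdorffEdist R K ≠ ⊤ :=
    Metric.hausdorffEdist_ne_top_of_nonempty_of_bounded hRne hKne hRbdd hKc.isBounded
  -- an intrinsic interior point with its relative ball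
  obtain ⟨v, hv⟩ := hKne.intrinsicInterior hKv
  have hvK : v ∈ K := intrinsicInterior_subset hv
  obtain ⟨r, hr, hrball⟩ := intrinsic_ball_of_mem hv
  -- the contraction factor
  set D := Metric.diam K with hD
  have hD0 : 0 ≤ D := Metric.diam_nonneg
  set τ := min 1 (ε / (2*(D+1))) with hτdef
  have hτ0 : 0 < τ := lt_min one_pos (by positivity)
  have hτ1 : τ ≤ 1 := min_le_left _ _
  set θ := 1 - τ with hθdef
  have hθ0 : 0 ≤ θ := by rw [hθdef]; linarith
  have hθτ : θ + τ = 1 := by rw [hθdef]; ring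
  -- the shrunken body Kθ
  set c : Euc d → Euc d := fun z => θ • (z - v) + v with hc
  have hcaff : c = ⇑(AffineMap.homothety v θ) := by
    funext z
    rw [hc, AffineMap.homothety_apply]
    simp [vsub_eq_sub, vadd_eq_add]
  set Kθ := c '' K with hKθ
  have hKθne : Kθ.Nonempty := ⟨c v, ⟨v, hvK, rfl⟩⟩
  have hKθconv : Convex ℝ Kθ := by
    rw [hKθ, hcaff]
    exact hKv.affine_image _
  have hKθcompact : IsCompact Kθ := by
    apply hKc.image
    rw [hc]
    exact ((continuous_id.sub continuous_const).const_smul θ).add continuous_const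
  have hKθK : Kθ ⊆ K := by
    rintro _ ⟨k, hk, rfl⟩
    have : c k = θ • k + τ • v := by
      rw [hc, hθdef]
      module
    rw [this]
    exact hKv hk hvK hθ0 (le_of_lt hτ0) hθτ
  have hKθint : Kθ ⊆ intrinsicInterior ℝ K := by
    rintro _ ⟨k, hk, rfl⟩
    have hzK : c k ∈ K := hKθK ⟨k, hk, rfl⟩
    apply intrinsic_mem_of_ball (subset_affineSpan ℝ K hzK) (ρ := τ * r) (by positivity)
    intro u hu hdist
    set u' := τ⁻¹ • (u - c k) + v with hu'
    have hu'span : u' ∈ affineSpan ℝ K := by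
      have hz' : c k ∈ affineSpan ℝ K := subset_affineSpan ℝ K hzK
      have hdir : u - c k ∈ (affineSpan ℝ K).direction := by
        have := AffineSubspace.vsub_mem_direction hu hz'
        rwa [vsub_eq_sub] at this
      have hsm : τ⁻¹ • (u - c k) ∈ (affineSpan ℝ K).direction :=
        Submodule.smul_mem _ _ hdir
      have := AffineSubspace.vadd_mem_of_mem_direction hsm (subset_affineSpan ℝ K hvK)
      rw [vadd_eq_add] at this
      rwa [← hu'] at this
    have hu'K : u' ∈ K := by
      apply hrball u' hu'span
      rw [hu']
      have : dist (τ⁻¹ • (u - c k) + v) v = τ⁻¹ * ‖u - c k‖ := by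
        rw [dist_eq_norm, add_sub_cancel_right, norm_smul, Real.norm_eq_abs,
          abs_of_pos (inv_pos.2 hτ0)]
      rw [this]
      have huck : ‖u - c k‖ < τ * r := by rw [← dist_eq_norm]; exact hdist
      calc τ⁻¹ * ‖u - c k‖ < τ⁻¹ * (τ * r) := by
            apply mul_lt_mul_of_pos_left huck (inv_pos.2 hτ0)
        _ = r := by field_simp
    have hττ : τ • (τ⁻¹ • (u - c k)) = u - c k := by
      rw [smul_smul, mul_inv_cancel₀ (ne_of_gt hτ0), one_smul]
    have hcomb : u = θ • k + τ • u' := by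
      rw [hu', smul_add, hττ, hc, hθdef]
      module
    rw [hcomb]
    exact hKv hk hu'K hθ0 (le_of_lt hτ0) hθτ
  -- metric projection onto Kθ
  obtain ⟨proj, hprojcont, hprojmem, hprojle⟩ := exists_proj hKθne hKθcompact hKθconv
  -- Birkhoff averaging time
  obtain ⟨n, hn⟩ := avg_close T hT F (show 0 < ε/4 by linarith)
  set Afun : X → Euc d := fun y => ((n:ℝ)+1)⁻¹ • ∑ i ∈ Finset.range (n+1), F (T^[i] y)
    with hAfun
  have hAcont : Continuous Afun := by
    rw [hAfun]
    exact (continuous_finset_sum _ fun i _ => F.continuous.comp (hT.iterate i)).const_smul (((n:ℝ)+1)⁻¹)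
  set S : ℕ → X → Euc d := fun j y => ∑ i ∈ Finset.range j, F (T^[i] y) with hSdef
  have hScont : ∀ j, Continuous (S j) := fun j =>
    continuous_finset_sum _ fun i _ => F.continuous.comp (hT.iterate i)
  obtain ⟨H, hHeq⟩ : ∃ H : C(X, Euc d), ∀ y,
      H y = ((n:ℝ)+1)⁻¹ • ∑ j ∈ Finset.range (n+1), S j y :=
    ⟨⟨_, (continuous_finset_sum _ fun j _ => hScont j).const_smul (((n:ℝ)+1)⁻¹)⟩, fun y => rfl⟩
  obtain ⟨F'', hF''eq⟩ : ∃ G : C(X, Euc d), ∀ y, G y = proj (Afun y) :=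
    ⟨⟨_, hprojcont.comp hAcont⟩, fun y => rfl⟩
  obtain ⟨F', hF'eq⟩ : ∃ G : C(X, Euc d), ∀ y, G y = F'' y + (H y - H (T y)) :=
    ⟨⟨fun y => F'' y + (H y - H (T y)),
      (F''.continuous.add (H.continuous.sub (H.continuous.comp hT)))⟩, fun y => rfl⟩
  -- the coboundary identity
  have hcob : ∀ y : X, H y - H (T y) = F y - Afun y := by
    intro y
    have hSj : ∀ j, S j (T y) = S (j+1) y - F y := by
      intro j
      rw [hSdef]
      simp only
      have h1 : ∀ i, F (T^[i] (T y)) = F (T^[i+1] y) := fun i => by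
        rw [← Function.iterate_succ_apply]
      rw [Finset.sum_congr rfl fun i _ => h1 i]
      have h2 := Finset.sum_range_succ' (fun i => F (T^[i] y)) j
      simp only [Function.iterate_zero_apply] at h2
      exact eq_sub_of_add_eq h2.symm
    have hsum2 : ∑ j ∈ Finset.range (n+1), S j (T y)
        = (∑ j ∈ Finset.range (n+1), S j y) + S (n+1) y - ((n+1) : ℕ) • F y := by
      rw [Finset.sum_congr rfl fun j _ => hSj j, Finset.sum_sub_distrib]
      have h3 := Finset.sum_range_succ' (fun j => S j y) (n+1)
      have h4 := Finset.sum_range_succ (fun j => S j y) (n+1)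
      have hS0 : S 0 y = 0 := by rw [hSdef]; simp
      have h5 : ∑ j ∈ Finset.range (n+1), S (j+1) y
          = (∑ j ∈ Finset.range (n+1), S j y) + S (n+1) y := by
        have := h3.symm.trans h4
        rw [hS0, add_zero] at this
        exact this
      rw [h5, Finset.sum_const, Finset.card_range]
    have hA' : Afun y = ((n:ℝ)+1)⁻¹ • S (n+1) y := rfl
    rw [hHeq, hHeq, ← smul_sub, hsum2, hA']
    have hexp : (∑ j ∈ Finset.range (n+1), S j y)
        - ((∑ j ∈ Finset.range (n+1), S j y) + S (n+1) y - ((n+1) : ℕ) • F y)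
        = ((n+1) : ℕ) • F y - S (n+1) y := by abel
    rw [hexp, ← Nat.cast_smul_eq_nsmul ℝ, smul_sub, smul_smul]
    have hone : ((n:ℝ)+1)⁻¹ * ((n+1 : ℕ) : ℝ) = 1 := by
      rw [Nat.cast_add, Nat.cast_one]
      exact inv_mul_cancel₀ (by positivity)
    rw [hone, one_smul]
  refine ⟨F', ?_, ?_, F'', H, ?_, ?_⟩
  · -- rotation set inside the intrinsic interior
    rintro w ⟨μ, hμp, hμi, rfl⟩
    haveI := hμp
    have hIH : Integrable (fun y => H y) μ := contE_integrable H μ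
    have hIHT : Integrable (fun y => H (T y)) μ :=
      contE_integrable (H.comp ⟨T, hT⟩) μ
    have hIF'' : Integrable (fun y => F'' y) μ := contE_integrable F'' μ
    have hintH : ∫ y, H (T y) ∂μ = ∫ y, H y ∂μ := by
      have h1 : ∫ y, H y ∂(Measure.map T μ) = ∫ y, H (T y) ∂μ :=
        integral_map hT.measurable.aemeasurable H.continuous.aestronglyMeasurable
      rw [hμi] at h1
      exact h1.symm
    have hsplit : ∫ y, F' y ∂μ = ∫ y, F'' y ∂μ := by
      have h2 : ∫ y, F' y ∂μ
          = ∫ y, F'' y ∂μ + ((∫ y, H y ∂μ) - ∫ y, H (T y) ∂μ) := by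
        calc ∫ y, F' y ∂μ = ∫ y, (F'' y + (H y - H (T y))) ∂μ := by
              simp only [hF'eq]
          _ = (∫ y, F'' y ∂μ) + ∫ y, (H y - H (T y)) ∂μ :=
              integral_add hIF'' (hIH.sub hIHT)
          _ = ∫ y, F'' y ∂μ + ((∫ y, H y ∂μ) - ∫ y, H (T y) ∂μ) := by
              rw [integral_sub hIH hIHT]
      rw [h2, hintH, sub_self, add_zero]
    rw [hsplit]
    apply hKθint
    apply hKθconv.integral_mem hKθcompact.isClosed
      (Filter.Eventually.of_forall fun y => ?_) hIF''
    rw [hF''eq]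
    exact hprojmem (Afun y)
  · -- the uniform bound
    rw [ContinuousMap.norm_le _ (by linarith : (0:ℝ) ≤ 2 * ε)]
    intro y
    have hFy : (F - F') y = Afun y - F'' y := by
      rw [ContinuousMap.sub_apply, hF'eq y, hcob y]
      abel
    rw [hFy]
    obtain ⟨w, hwR, hw⟩ := (Metric.infDist_lt_iff hRne).1 (hn y)
    have h2 : infDist w K ≤ ε :=
      le_trans (Metric.infDist_le_hausdorffDist_of_mem hwR hedist) hd
    obtain ⟨k, hk, hk2⟩ := (Metric.infDist_lt_iff hKne).1
      (lt_of_le_of_lt h2 (show ε < ε + ε/4 by linarith))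
    have huKθ : c k ∈ Kθ := ⟨k, hk, rfl⟩
    have hdku : dist k (c k) ≤ τ * D := by
      have he : k - c k = τ • (k - v) := by
        rw [hc, hθdef]
        module
      rw [dist_eq_norm, he, norm_smul, Real.norm_eq_abs, abs_of_pos hτ0]
      have : ‖k - v‖ ≤ D := by
        rw [← dist_eq_norm]
        exact Metric.dist_le_diam_of_mem hKc.isBounded hk hvK
      exact mul_le_mul_of_nonneg_left this (le_of_lt hτ0)
    have hτD : τ * D ≤ ε/2 := by
      have h5 : τ ≤ ε / (2*(D+1)) := min_le_right _ _
      have h6 : τ * D ≤ (ε / (2*(D+1))) * D := mul_le_mul_of_nonneg_right h5 hD0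
      have h7 : (ε / (2*(D+1))) * D ≤ ε/2 := by
        rw [div_mul_eq_mul_div, div_le_div_iff₀ (by positivity) (by norm_num : (0:ℝ) < 2)]
        nlinarith [mul_nonneg (le_of_lt hε) hD0]
      linarith
    have hproj1 : ‖Afun y - F'' y‖ ≤ ‖Afun y - c k‖ := by
      rw [hF''eq]
      exact hprojle (Afun y) (c k) huKθ
    calc ‖Afun y - F'' y‖ ≤ ‖Afun y - c k‖ := hproj1
      _ = dist (Afun y) (c k) := (dist_eq_norm _ _).symm
      _ ≤ dist (Afun y) w + dist w k + dist k (c k) := dist_triangle4 _ _ _ _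
      _ ≤ ε/4 + (ε + ε/4) + ε/2 := by
          have := le_of_lt hw
          have := le_of_lt hk2
          have := hdku
          gcongr <;> linarith
      _ = 2 * ε := by ring
  · -- the coboundary equation
    intro y
    rw [hF'eq y]
    abel
  · -- range of F'' inside the affine span
    rintro _ ⟨y, rfl⟩
    apply subset_affineSpan ℝ K
    apply hKθK
    rw [hF''eq]
    exact hprojmem (Afun y)

end Part6b

/-- the adjustment lemma, putting the rotation set inside the relative
interior of `K` at uniform cost `2ε`, via a potential cohomologous to one with image in
the affine hull of `K`. -/
theorem adjustment_lemma {d : ℕ} {X : Type*} [MetricSpace X] [CompactSpace X]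
    [MeasurableSpace X] [BorelSpace X] (T : X → X) (hT : Continuous T)
    (hne : NonUniquelyErgodic T) (hdense : DensePeriodicMeasures T)
    (F : C(X, Euc d)) (K : Set (Euc d)) (hKne : K.Nonempty) (hKc : IsCompact K)
    (hKv : Convex ℝ K) (ε : ℝ) (hε : 0 < ε) (hd : hausdorffDist (rotSet T F) K ≤ ε) :
    ∃ F' : C(X, Euc d),
      rotSet T F' ⊆ intrinsicInterior ℝ K ∧
      ‖F - F'‖ ≤ 2 * ε ∧
      ∃ F'' H : C(X, Euc d), (∀ x : X, F' x - F'' x = H x - H (T x)) ∧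
        range F'' ⊆ (affineSpan ℝ K : Set (Euc d)) := by
  obtain ⟨μ, ν, hμp, hνp, hμi, hνi, -⟩ := hne
  exact adjustment_lemma' T hT ⟨μ, hμp, hμi⟩ F K hKne hKc hKv ε hε hd
end
end

section
/- Suppose T : X → X has a fixed point x₀. Then there exists a nonempty open set U in the space Lip(X, ℝ²) of Lipschitz potentials (with the Lipschitz norm) such that for all F ∈ U, the rotation set R(F) has a corner (a boundary point where ∂R(F) is non-differentiable, i.e., with more than one supporting line). Consequently, the restriction of the rotation map R to Lip(X, ℝ²) is not an open map into (CB(ℝ²), d_H). -/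
open MeasureTheory Topology Metric Set Filter Function
open scoped ENNReal RealInnerProductSpace

noncomputable section

namespace RotAux

def uv (s : ℝ) : Euc 2 := WithLp.toLp 2 ![s / Real.sqrt 2, 1 / Real.sqrt 2]

lemma inner_uv (x : Euc 2) (s : ℝ) :
    ⟪x, uv s⟫ = x 0 * (s / Real.sqrt 2) + x 1 * (1 / Real.sqrt 2) := by
  simp [uv, PiLp.toLp_apply, PiLp.inner_apply, Fin.sum_univ_two, RCLike.inner_apply, mul_comm]

lemma norm_uv (s : ℝ) (hs : s = 1 ∨ s = -1) : ‖uv s‖ = 1 := by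
  have hs2 : s ^ 2 = 1 := by rcases hs with h | h <;> simp [h]
  rw [EuclideanSpace.norm_eq]
  simp only [uv, PiLp.toLp_apply, Fin.sum_univ_two, Matrix.cons_val_zero, Matrix.cons_val_one, Matrix.head_cons,
    Real.norm_eq_abs, sq_abs]
  rw [div_pow, div_pow, hs2, Real.sq_sqrt (by norm_num : (0:ℝ) ≤ 2)]
  norm_num

lemma sqrt2_gt_one : 1 < Real.sqrt 2 := by
  rw [show (1:ℝ) = Real.sqrt 1 by simp]
  exact Real.sqrt_lt_sqrt (by norm_num) (by norm_num)

lemma uv_ne : uv 1 ≠ uv (-1) := by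
  intro h
  have h0 : (uv 1) 0 = (uv (-1)) 0 := by rw [h]
  simp only [uv, PiLp.toLp_apply, Matrix.cons_val_zero] at h0
  have := sqrt2_gt_one
  rw [div_eq_div_iff (by linarith) (by linarith)] at h0
  nlinarith

lemma coord_le_dist (p q : Euc 2) : |p 1 - q 1| ≤ dist p q := by
  rw [EuclideanSpace.dist_eq]
  calc |p 1 - q 1| = Real.sqrt ((p 1 - q 1)^2) := (Real.sqrt_sq_eq_abs _).symm
    _ ≤ _ := by
        apply Real.sqrt_le_sqrt
        rw [Fin.sum_univ_two]
        rw [Real.dist_eq, Real.dist_eq, sq_abs, sq_abs]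
        nlinarith [sq_nonneg (p 0 - q 0)]

variable {X : Type*} [MetricSpace X] [CompactSpace X] [MeasurableSpace X] [BorelSpace X]

def Fz (x₀ : X) : X → Euc 2 := fun x => WithLp.toLp 2 ![0, -2 * dist x x₀]

lemma Fz_self (x₀ : X) : Fz x₀ x₀ = 0 := by
  ext i; fin_cases i <;> simp [Fz, PiLp.toLp_apply]

lemma lip_Fz (x₀ : X) : LipschitzWith 2 (Fz x₀) := by
  apply LipschitzWith.of_dist_le_mul
  intro x y
  have h1 : dist (Fz x₀ x) (Fz x₀ y) = |(-2 * dist x x₀) - (-2 * dist y x₀)| := by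
    rw [EuclideanSpace.dist_eq]
    simp [Fz, PiLp.toLp_apply, Fin.sum_univ_two, Real.sqrt_sq_eq_abs, Real.dist_eq]
  rw [h1]
  have h2 := abs_dist_sub_le x y x₀
  calc |(-2 * dist x x₀) - (-2 * dist y x₀)| = 2 * |dist x x₀ - dist y x₀| := by
        rw [show (-2 * dist x x₀) - (-2 * dist y x₀) = (-2) * (dist x x₀ - dist y x₀) by ring,
          abs_mul]; norm_num
    _ ≤ 2 * dist x y := by nlinarith [abs_nonneg (dist x x₀ - dist y x₀)]

lemma cont_of_ball {x₀ : X} {F : X → Euc 2} {L : NNReal}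
    (h : LipschitzWith L (F - Fz x₀)) : Continuous F := by
  have : F = (F - Fz x₀) + Fz x₀ := by funext x; simp
  rw [this]; exact h.continuous.add (lip_Fz x₀).continuous

lemma integrable_of_cont {F : X → Euc 2} (hF : Continuous F) (μ : Measure X)
    [IsFiniteMeasure μ] : Integrable F μ :=
  hF.integrable_of_hasCompactSupport
    (isCompact_univ.of_isClosed_subset (isClosed_tsupport F) (Set.subset_univ _))

lemma pointwise (x₀ : X) (F : X → Euc 2) (L : NNReal)
    (hLip : LipschitzWith L (F - Fz x₀)) (hL : (L : ℝ) ≤ 1)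
    (s : ℝ) (hs : s = 1 ∨ s = -1) (x : X) :
    ⟪F x - F x₀, uv s⟫ ≤ 0 := by
  have hd := hLip.dist_le_mul x x₀
  set g := F - Fz x₀ with hg
  have hdecomp : F x - F x₀ = Fz x₀ x + (g x - g x₀) := by
    have h1 : g x = F x - Fz x₀ x := rfl
    have h2 : g x₀ = F x₀ - Fz x₀ x₀ := rfl
    rw [h1, h2, Fz_self]; abel
  rw [hdecomp, inner_add_left]
  have h1 : ⟪Fz x₀ x, uv s⟫ = -2 * dist x x₀ * (1 / Real.sqrt 2) := by
    rw [inner_uv]; simp [Fz, PiLp.toLp_apply]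
  have h2 : ⟪g x - g x₀, uv s⟫ ≤ (L : ℝ) * dist x x₀ := by
    calc ⟪g x - g x₀, uv s⟫ ≤ ‖g x - g x₀‖ * ‖uv s‖ := real_inner_le_norm _ _
      _ = dist (g x) (g x₀) * 1 := by rw [norm_uv s hs, dist_eq_norm]
      _ ≤ (L : ℝ) * dist x x₀ := by rw [mul_one]; exact hd
  rw [h1]
  have hd0 := dist_nonneg (x := x) (y := x₀)
  have hsq : Real.sqrt 2 * Real.sqrt 2 = 2 := Real.mul_self_sqrt (by norm_num)
  have h3 : -2 * dist x x₀ * (1 / Real.sqrt 2) = -(Real.sqrt 2 * dist x x₀) := by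
    have h4 : (0:ℝ) < Real.sqrt 2 := by linarith [sqrt2_gt_one]
    field_simp
    nlinarith
  rw [h3]
  have h5 : (L : ℝ) * dist x x₀ ≤ Real.sqrt 2 * dist x x₀ := by
    apply mul_le_mul_of_nonneg_right _ hd0
    linarith [sqrt2_gt_one]
  linarith

/-- Main supporting-hyperplane estimate. -/
lemma rot_le (T : X → X) (x₀ : X) (F : X → Euc 2) (L : NNReal)
    (hLip : LipschitzWith L (F - Fz x₀)) (hL : (L : ℝ) ≤ 1)
    (s : ℝ) (hs : s = 1 ∨ s = -1) :
    ∀ w ∈ rotSet T F, ⟪w, uv s⟫ ≤ ⟪F x₀, uv s⟫ := by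
  rintro w ⟨μ, hμp, -, hμi⟩
  have hFc : Continuous F := cont_of_ball hLip
  have hInt : Integrable F μ := integrable_of_cont hFc μ
  have hIntc : Integrable (fun x => F x - F x₀) μ := hInt.sub (integrable_const _)
  have h1 : ∫ x, ⟪uv s, F x - F x₀⟫ ∂μ ≤ 0 :=
    integral_nonpos fun x => by
      rw [real_inner_comm]; exact pointwise x₀ F L hLip hL s hs x
  rw [integral_inner hIntc, integral_sub hInt (integrable_const _), inner_sub_right,
    sub_nonpos, integral_const, probReal_univ] at h1
  simp only [ENNReal.toReal_one, one_smul] at h1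
  rw [hμi] at h1
  calc ⟪w, uv s⟫ = ⟪uv s, w⟫ := real_inner_comm _ _
    _ ≤ ⟪uv s, F x₀⟫ := h1
    _ = ⟪F x₀, uv s⟫ := real_inner_comm _ _

lemma fixpt_mem (T : X → X) (hT : Continuous T) (x₀ : X) (hfix : T x₀ = x₀)
    (F : X → Euc 2) (hFc : Continuous F) : F x₀ ∈ rotSet T F := by
  refine ⟨Measure.dirac x₀, inferInstance, ?_, ?_⟩
  · rw [Measure.map_dirac' hT.measurable, hfix]
  · exact integral_dirac F x₀

lemma mem_frontier_of_support {S : Set (Euc 2)} {v u : Euc 2} (hu : ‖u‖ = 1)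
    (hv : v ∈ S) (hsupp : ∀ w ∈ S, ⟪w, u⟫ ≤ ⟪v, u⟫) : v ∈ frontier S := by
  constructor
  · exact subset_closure hv
  · intro hint
    rw [mem_interior_iff_mem_nhds, Metric.mem_nhds_iff] at hint
    obtain ⟨ε, hε, hball⟩ := hint
    have hmem : v + (ε / 2) • u ∈ S := by
      apply hball
      rw [Metric.mem_ball, dist_eq_norm]
      simp only [add_sub_cancel_left, norm_smul, hu, Real.norm_eq_abs, mul_one]
      rw [abs_of_pos (by linarith)]; linarith
    have := hsupp _ hmem
    rw [inner_add_left, real_inner_smul_left, real_inner_self_eq_norm_sq, hu] at this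
    nlinarith

end RotAux

open RotAux

/-- if `T` has a fixed point, there is a nonempty open ball (for the
Lipschitz norm `‖·‖_∞ + Lip(·)`) of Lipschitz potentials whose rotation sets all have a
corner; consequently the restriction of the rotation map to Lipschitz potentials is not
open into `(CB(ℝ²), d_H)`. -/
theorem lipschitz_rotation_map_not_open {X : Type*} [MetricSpace X] [CompactSpace X]
    [MeasurableSpace X] [BorelSpace X] (T : X → X) (hT : Continuous T)
    (x₀ : X) (hfix : T x₀ = x₀) :
    ∃ (F₀ : X → Euc 2) (_ : ∃ L : NNReal, LipschitzWith L F₀) (δ : ℝ), 0 < δ ∧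
      (∀ F : X → Euc 2,
        (∃ L : NNReal, LipschitzWith L (F - F₀) ∧ (⨆ x, ‖F x - F₀ x‖) + L < δ) →
        ∃ v ∈ frontier (rotSet T F),
          ∃ u₁ u₂ : Euc 2, u₁ ≠ u₂ ∧ ‖u₁‖ = 1 ∧ ‖u₂‖ = 1 ∧
            (∀ w ∈ rotSet T F, ⟪w, u₁⟫ ≤ ⟪v, u₁⟫) ∧
            (∀ w ∈ rotSet T F, ⟪w, u₂⟫ ≤ ⟪v, u₂⟫)) ∧
      ¬ ∃ ε : ℝ, 0 < ε ∧ ∀ K : Set (Euc 2), K.Nonempty → IsCompact K → Convex ℝ K →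
          hausdorffDist K (rotSet T F₀) < ε →
          ∃ (G : X → Euc 2) (L : NNReal), LipschitzWith L (G - F₀) ∧
            (⨆ x, ‖G x - F₀ x‖) + L < δ ∧ rotSet T G = K := by
  have hs2 := sqrt2_gt_one
  have hLone : ∀ (F : X → Euc 2) (L : NNReal), (⨆ x, ‖F x - Fz x₀ x‖) + (L : ℝ) < 1 →
      (L : ℝ) ≤ 1 := by
    intro F L h
    have h0 : (0:ℝ) ≤ ⨆ x, ‖F x - Fz x₀ x‖ := Real.iSup_nonneg fun x => norm_nonneg _
    linarith
  refine ⟨Fz x₀, ⟨2, lip_Fz x₀⟩, 1, one_pos, ?_, ?_⟩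
  · rintro F ⟨L, hLip, hsm⟩
    have hL : (L : ℝ) ≤ 1 := hLone F L hsm
    have hFc : Continuous F := cont_of_ball hLip
    have hv : F x₀ ∈ rotSet T F := fixpt_mem T hT x₀ hfix F hFc
    have hs1 := rot_le T x₀ F L hLip hL 1 (Or.inl rfl)
    have hss2 := rot_le T x₀ F L hLip hL (-1) (Or.inr rfl)
    exact ⟨F x₀, mem_frontier_of_support (norm_uv 1 (Or.inl rfl)) hv hs1,
      uv 1, uv (-1), uv_ne, norm_uv 1 (Or.inl rfl), norm_uv (-1) (Or.inr rfl), hs1, hss2⟩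
  · rintro ⟨ε, hε, hK⟩
    set R₀ := rotSet T (Fz x₀) with hR₀
    -- basic facts about R₀
    have h0 : (0 : Euc 2) ∈ R₀ := by
      have := fixpt_mem T hT x₀ hfix (Fz x₀) (lip_Fz x₀).continuous
      rwa [Fz_self] at this
    have hR₀ne : R₀.Nonempty := ⟨0, h0⟩
    have hzero : LipschitzWith 0 (Fz x₀ - Fz x₀) := by
      rw [sub_self]; exact LipschitzWith.const' 0
    have hsupp : ∀ s, s = 1 ∨ s = -1 → ∀ w ∈ R₀, ⟪w, uv s⟫ ≤ 0 := by
      intro s hs w hw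
      have := rot_le T x₀ (Fz x₀) 0 hzero (by norm_num) s hs w hw
      rwa [Fz_self, inner_zero_left] at this
    have hcoord : ∀ w ∈ R₀, w 1 ≤ 0 := by
      intro w hw
      have h1 := hsupp 1 (Or.inl rfl) w hw
      have h2 := hsupp (-1) (Or.inr rfl) w hw
      rw [inner_uv] at h1 h2
      have hpos : (0:ℝ) < Real.sqrt 2 := by linarith
      have hsum : w 1 * (2 / Real.sqrt 2) ≤ 0 := by
        calc w 1 * (2 / Real.sqrt 2)
            = (w 0 * (1 / Real.sqrt 2) + w 1 * (1 / Real.sqrt 2))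
              + (w 0 * (-1 / Real.sqrt 2) + w 1 * (1 / Real.sqrt 2)) := by ring
          _ ≤ 0 := by linarith
      have h4 : (0:ℝ) < 2 / Real.sqrt 2 := by positivity
      nlinarith
    have : Nonempty X := ⟨x₀⟩
    have hbdd : Bornology.IsBounded R₀ := by
      obtain ⟨z, -, hz⟩ := isCompact_univ.exists_isMaxOn ⟨x₀, Set.mem_univ x₀⟩
        (continuous_norm.comp (lip_Fz x₀).continuous).continuousOn
      apply (isBounded_closedBall (x := (0 : Euc 2)) (r := ‖Fz x₀ z‖)).subset
      rintro w ⟨μ, hμ, -, hμi⟩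
      rw [mem_closedBall_zero_iff, ← hμi]
      have := norm_integral_le_of_norm_le_const (μ := μ) (f := Fz x₀) (C := ‖Fz x₀ z‖)
        (ae_of_all _ fun x => hz (Set.mem_univ x))
      simpa [measure_univ] using this
    have hconv : Convex ℝ R₀ := by
      rintro v ⟨μ, hμ, hμT, hμi⟩ w ⟨ν, hν, hνT, hνi⟩ a b ha hb hab
      have hIμ : Integrable (Fz x₀) μ := integrable_of_cont (lip_Fz x₀).continuous μ
      have hIν : Integrable (Fz x₀) ν := integrable_of_cont (lip_Fz x₀).continuous ν
      refine ⟨ENNReal.ofReal a • μ + ENNReal.ofReal b • ν, ?_, ?_, ?_⟩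
      · constructor
        simp only [Measure.coe_add, Pi.add_apply, Measure.coe_smul, Pi.smul_apply,
          measure_univ, smul_eq_mul, mul_one]
        rw [← ENNReal.ofReal_add ha hb, hab, ENNReal.ofReal_one]
      · rw [Measure.map_add _ _ hT.measurable, Measure.map_smul, Measure.map_smul, hμT, hνT]
      · rw [integral_add_measure (hIμ.smul_measure ENNReal.ofReal_ne_top)
          (hIν.smul_measure ENNReal.ofReal_ne_top),
          integral_smul_measure, integral_smul_measure, hμi, hνi,
          ENNReal.toReal_ofReal ha, ENNReal.toReal_ofReal hb]
    -- the test set K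
    set η := ε / 2 with hη
    have hηpos : 0 < η := by positivity
    set K := cthickening η R₀ with hKdef
    have hKne : K.Nonempty := ⟨0, self_subset_cthickening _ h0⟩
    have hKcpt : IsCompact K := isCompact_of_isClosed_isBounded isClosed_cthickening
      (hbdd.cthickening)
    have hKconv : Convex ℝ K := hconv.cthickening η
    have hKdist : hausdorffDist K R₀ < ε := by
      have h1 : hausdorffDist K R₀ ≤ η := by
        apply hausdorffDist_le_of_infDist (le_of_lt hηpos)
        · intro x hx
          rw [mem_cthickening_iff] at hx
          exact ENNReal.toReal_le_of_le_ofReal (le_of_lt hηpos) hx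
        · intro y hy
          rw [infDist_zero_of_mem (self_subset_cthickening _ hy)]
          exact le_of_lt hηpos
      linarith
    obtain ⟨G, L, hGlip, hGsm, hGK⟩ := hK K hKne hKcpt hKconv hKdist
    have hL : (L : ℝ) ≤ 1 := hLone G L hGsm
    have hGc : Continuous G := cont_of_ball hGlip
    -- the corner point
    have hvK : G x₀ ∈ K := by rw [← hGK]; exact fixpt_mem T hT x₀ hfix G hGc
    have hmemu : ∀ s, s = 1 ∨ s = -1 → η • uv s ∈ K := by
      intro s hs
      rw [hKdef, mem_cthickening_iff]
      calc EMetric.infEdist (η • uv s) R₀ ≤ edist (η • uv s) 0 :=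
            EMetric.infEdist_le_edist_of_mem h0
        _ = ENNReal.ofReal η := by
            rw [edist_dist, dist_zero_right, norm_smul, norm_uv s hs, Real.norm_eq_abs,
              abs_of_pos hηpos, mul_one]
    have hcorner : ∀ s, s = 1 ∨ s = -1 → η ≤ ⟪G x₀, uv s⟫ := by
      intro s hs
      have h1 := rot_le T x₀ G L hGlip hL s hs (η • uv s) (by rw [hGK]; exact hmemu s hs)
      rw [real_inner_smul_left, real_inner_self_eq_norm_sq, norm_uv s hs] at h1
      simpa using h1
    -- contradiction
    have hup' : Real.sqrt 2 * η ≤ G x₀ 1 := by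
      have h1 := hcorner 1 (Or.inl rfl)
      have h2 := hcorner (-1) (Or.inr rfl)
      rw [inner_uv] at h1 h2
      have hpos : (0:ℝ) < Real.sqrt 2 := by linarith
      have hsum : η + η ≤ G x₀ 1 * (2 / Real.sqrt 2) := by
        calc η + η
            ≤ (G x₀ 0 * (1 / Real.sqrt 2) + G x₀ 1 * (1 / Real.sqrt 2))
              + (G x₀ 0 * (-1 / Real.sqrt 2) + G x₀ 1 * (1 / Real.sqrt 2)) := add_le_add h1 h2
          _ = G x₀ 1 * (2 / Real.sqrt 2) := by ring
      have h2s : 2 / Real.sqrt 2 = Real.sqrt 2 := by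
        rw [eq_comm, eq_div_iff hpos.ne', Real.mul_self_sqrt (by norm_num : (0:ℝ) ≤ 2)]
      rw [h2s] at hsum
      nlinarith [Real.mul_self_sqrt (by norm_num : (0:ℝ) ≤ 2)]
    have hdown : G x₀ 1 < η + η * (Real.sqrt 2 - 1) / 2 := by
      have hinf : infDist (G x₀) R₀ ≤ η := by
        rw [hKdef, mem_cthickening_iff] at hvK
        exact ENNReal.toReal_le_of_le_ofReal (le_of_lt hηpos) hvK
      have ht : (0:ℝ) < η * (Real.sqrt 2 - 1) / 2 := by
        have : (0:ℝ) < Real.sqrt 2 - 1 := by linarith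
        positivity
      obtain ⟨w, hwR, hwd⟩ := (infDist_lt_iff hR₀ne).mp
        (lt_of_le_of_lt hinf (by linarith : η < η + η * (Real.sqrt 2 - 1) / 2))
      have hc := coord_le_dist (G x₀) w
      have hw1 := hcoord w hwR
      have := abs_le.mp (le_of_lt (lt_of_le_of_lt hc hwd))
      linarith [this.2]
    nlinarith [hηpos, hup', hdown]
end
end
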